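/- arXiv:0905.2215 — 4 statements merged into one kernel-verified Lean document; each statement's English description precedes it below -/
import Mathlib

section
/- Let B be a finite-dimensional Hopf algebra with bijective antipode and H(B*) its Heisenberg double with the D(B)-module structure of the 'heterotic' action. For the universal R-matrix R = Σ_I (ε ⊗ e_I) ⊗ (e^I ⊗ 1) of D(B), the half R-commutativity relation (R⁽²⁾ ▷ (ε # b))(R⁽¹⁾ ▷ (α # 1)) = α # b holds for all α ∈ B* and b ∈ B. -/
set_option synthInstance.maxHeartbeats 1000000
set_option maxHeartbeats 1000000

open TensorProduct

noncomputable section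

variable {k B : Type*} [Field k] [Ring B] [HopfAlgebra k B]

/-- Convolution product on the dual `B*`. -/
def dualMul (α β : Module.Dual k B) : Module.Dual k B :=
  (TensorProduct.lift ((LinearMap.mul k k).compl₁₂ α β)).comp Coalgebra.comul

/-- Left regular action of `B` on `B*`: `(a ⇀ β)(x) = β (x * a)`. -/
def lact (a : B) (β : Module.Dual k B) : Module.Dual k B :=
  β.comp (LinearMap.mulRight k a)

/-- Right action of `B*` on `B`: `a ↼ ν = ⟨ν, a'⟩ a''`. -/
def rlact (ν : Module.Dual k B) : B →ₗ[k] B :=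
  (TensorProduct.lid k B).toLinearMap ∘ₗ (TensorProduct.map ν LinearMap.id) ∘ₗ
    (Coalgebra.comul : B →ₗ[k] B ⊗[k] B)

namespace HalfR

variable {ι : Type*} [Fintype ι] (bB : Module.Basis ι k B)

lemma lact_apply (a : B) (β : Module.Dual k B) (x : B) : lact a β x = β (x * a) := rfl

lemma lact_one (β : Module.Dual k B) : lact 1 β = β := by
  ext x; simp [lact]

/-- `lact · α` as a linear map. -/
def lactD (α : Module.Dual k B) : B →ₗ[k] Module.Dual k B where
  toFun a := lact a α
  map_add' a a' := by ext x; simp [lact, mul_add]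
  map_smul' c a := by ext x; simp [lact, mul_smul_comm]

@[simp] lemma lactD_apply (α : Module.Dual k B) (a : B) : lactD α a = lact a α := rfl

/-- Expansion of an arbitrary element of `B ⊗ B` along the basis in the first leg. -/
lemma tensor_expand (x : B ⊗[k] B) :
    x = ∑ U, bB U ⊗ₜ[k]
      (TensorProduct.lid k B) (TensorProduct.map (bB.coord U) LinearMap.id x) := by
  induction x with
  | zero => simp
  | tmul a c =>
      simp only [TensorProduct.map_tmul, TensorProduct.lid_tmul, LinearMap.id_coe, id_eq]
      conv_lhs => rw [← bB.sum_repr a]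
      rw [TensorProduct.sum_tmul]
      exact Finset.sum_congr rfl fun U _ => by
        rw [TensorProduct.smul_tmul, Module.Basis.coord_apply]
  | add y z hy hz =>
      conv_lhs => rw [hy, hz]
      rw [← Finset.sum_add_distrib]
      exact Finset.sum_congr rfl fun U _ => by
        rw [map_add, map_add, TensorProduct.tmul_add]

/-- `Δ a = ∑ e_U ⊗ (a ↼ e^U)`. -/
lemma comul_expand (a : B) :
    Coalgebra.comul (R := k) a = ∑ U, bB U ⊗ₜ[k] rlact (bB.coord U) a := by
  simpa [rlact] using tensor_expand bB (Coalgebra.comul (R := k) a)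

lemma lift_comul {M : Type*} [AddCommMonoid M] [Module k M]
    (Φ : B →ₗ[k] B →ₗ[k] M) (a : B) :
    TensorProduct.lift Φ (Coalgebra.comul (R := k) a)
      = ∑ U, Φ (bB U) (rlact (bB.coord U) a) := by
  rw [comul_expand bB a, map_sum]
  simp

lemma rlact_expand (ν : Module.Dual k B) (z : B) :
    rlact ν z = ∑ V, ν (bB V) • rlact (bB.coord V) z := by
  have h : ∀ μ : Module.Dual k B, rlact μ z
      = ∑ V, μ (bB V) • (TensorProduct.lid k B)
          (TensorProduct.map (bB.coord V) LinearMap.id (Coalgebra.comul (R := k) z)) := by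
    intro μ
    simp only [rlact, LinearMap.comp_apply]
    conv_lhs => rw [tensor_expand bB (Coalgebra.comul (R := k) z)]
    rw [map_sum, map_sum]
    exact Finset.sum_congr rfl fun V _ => by
      simp [TensorProduct.map_tmul, TensorProduct.lid_tmul, TensorProduct.tmul_smul]
  rw [h ν]
  exact Finset.sum_congr rfl fun V _ => rfl

/-- collapse lemma, smul form. -/
lemma collapse {M : Type*} [AddCommMonoid M] [Module k M] (F : B →ₗ[k] M) (v : B) :
    ∑ I, bB.coord I v • F (bB I) = F v := by
  calc ∑ I, bB.coord I v • F (bB I) = F (∑ I, bB.repr v I • bB I) := by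
        rw [map_sum]; exact Finset.sum_congr rfl fun I _ => by rw [map_smul, Module.Basis.coord_apply]
    _ = F v := by rw [bB.sum_repr]

/-- collapse lemma, scalar form. -/
lemma collapse' (F : B →ₗ[k] k) (v : B) :
    ∑ I, bB.coord I v * F (bB I) = F v := by
  simpa [smul_eq_mul] using collapse bB F v

lemma dual_expand (ν : Module.Dual k B) :
    ∑ I, ν (bB I) • bB.coord I = ν := by
  ext x
  simp only [LinearMap.coe_sum, Finset.sum_apply, LinearMap.smul_apply, smul_eq_mul]
  calc ∑ I, ν (bB I) * bB.coord I x = ∑ I, bB.coord I x * ν (bB I) := by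
        exact Finset.sum_congr rfl fun I _ => mul_comm _ _
    _ = ν x := collapse' bB ν x

/-- dual collapse lemma. -/
lemma dcollapse {M : Type*} [AddCommMonoid M] [Module k M]
    (T : Module.Dual k B →ₗ[k] M) (ν : Module.Dual k B) :
    ∑ I, ν (bB I) • T (bB.coord I) = T ν := by
  calc ∑ I, ν (bB I) • T (bB.coord I) = ∑ I, T (ν (bB I) • bB.coord I) := by
        exact Finset.sum_congr rfl fun I _ => (map_smul T _ _).symm
    _ = T (∑ I, ν (bB I) • bB.coord I) := (map_sum T _ _).symm
    _ = T ν := by rw [dual_expand]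

section Chunk2
variable {k B : Type*} [Field k] [Ring B] [HopfAlgebra k B]
variable {ι : Type*} [Fintype ι] (bB : Module.Basis ι k B)

lemma Heps1 (a : B) :
    ∑ V, Coalgebra.counit (R := k) (bB V) • rlact (bB.coord V) a = a := by
  have h : (Coalgebra.counit (R := k)).rTensor B (Coalgebra.comul a) = (1 : k) ⊗ₜ[k] a :=
    LinearMap.congr_fun (Coalgebra.rTensor_counit_comp_comul (R := k) (A := B)) a
  rw [comul_expand bB a, map_sum] at h
  have h2 := congrArg (TensorProduct.lid k B) h
  rw [map_sum] at h2
  simpa [LinearMap.rTensor_tmul, TensorProduct.lid_tmul] using h2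

lemma Heps2 (a : B) :
    ∑ V, Coalgebra.counit (R := k) (rlact (bB.coord V) a) • bB V = a := by
  have h : (Coalgebra.counit (R := k)).lTensor B (Coalgebra.comul a) = a ⊗ₜ[k] (1 : k) :=
    LinearMap.congr_fun (Coalgebra.lTensor_counit_comp_comul (R := k) (A := B)) a
  rw [comul_expand bB a, map_sum] at h
  have h2 := congrArg (TensorProduct.rid k B) h
  rw [map_sum] at h2
  simpa [LinearMap.lTensor_tmul, TensorProduct.rid_tmul] using h2

lemma HS1 (a : B) :
    ∑ V, HopfAlgebra.antipode (R := k) (bB V) * rlact (bB.coord V) a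
      = Coalgebra.counit (R := k) a • (1 : B) := by
  have h := HopfAlgebra.mul_antipode_rTensor_comul_apply (R := k) a
  rw [comul_expand bB a, map_sum, map_sum] at h
  simpa [LinearMap.rTensor_tmul, LinearMap.mul'_apply, Algebra.algebraMap_eq_smul_one] using h

lemma HS2 (a : B) :
    ∑ V, bB V * HopfAlgebra.antipode (R := k) (rlact (bB.coord V) a)
      = Coalgebra.counit (R := k) a • (1 : B) := by
  have h := HopfAlgebra.mul_antipode_lTensor_comul_apply (R := k) a
  rw [comul_expand bB a, map_sum, map_sum] at h
  simpa [LinearMap.lTensor_tmul, LinearMap.mul'_apply, Algebra.algebraMap_eq_smul_one] using h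

lemma antipode_one' : HopfAlgebra.antipode (R := k) (1 : B) = 1 := by
  have h := HopfAlgebra.mul_antipode_rTensor_comul_apply (R := k) (1 : B)
  simpa [Bialgebra.comul_one, Algebra.TensorProduct.one_def, LinearMap.rTensor_tmul,
    LinearMap.mul'_apply] using h

lemma counit_antipode' (bB : Module.Basis ι k B) (a : B) :
    Coalgebra.counit (R := k) (HopfAlgebra.antipode (R := k) a)
      = Coalgebra.counit (R := k) a := by
  have h := congrArg (Coalgebra.counit (R := k)) (HS1 bB a)
  rw [map_sum] at h
  simp only [Bialgebra.counit_mul, map_smul, smul_eq_mul, Bialgebra.counit_one, mul_one] at h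
  have h2 : ∑ V, Coalgebra.counit (R := k) (HopfAlgebra.antipode (R := k) (bB V)) *
      Coalgebra.counit (R := k) (rlact (bB.coord V) a)
      = Coalgebra.counit (R := k) (HopfAlgebra.antipode (R := k) a) := by
    calc ∑ V, Coalgebra.counit (R := k) (HopfAlgebra.antipode (R := k) (bB V)) *
        Coalgebra.counit (R := k) (rlact (bB.coord V) a)
        = ∑ V, Coalgebra.counit (R := k) (HopfAlgebra.antipode (R := k)
            (Coalgebra.counit (R := k) (rlact (bB.coord V) a) • bB V)) := by
          exact Finset.sum_congr rfl fun V _ => by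
            rw [map_smul, map_smul, smul_eq_mul]; exact mul_comm _ _
      _ = Coalgebra.counit (R := k) (HopfAlgebra.antipode (R := k)
            (∑ V, Coalgebra.counit (R := k) (rlact (bB.coord V) a) • bB V)) := by
          rw [map_sum, map_sum]
      _ = _ := by rw [Heps2 bB a]
  rw [h2] at h
  exact h

lemma dualMul_apply (β γ : Module.Dual k B) (x : B) :
    dualMul β γ x = ∑ U, β (bB U) * γ (rlact (bB.coord U) x) := by
  simp only [dualMul, LinearMap.comp_apply]
  rw [lift_comul bB]
  simp [LinearMap.compl₁₂_apply]

lemma dualMul_counit (bB : Module.Basis ι k B) (β : Module.Dual k B) :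
    dualMul β (Coalgebra.counit (R := k)) = β := by
  ext x
  rw [dualMul_apply bB]
  calc ∑ U, β (bB U) * Coalgebra.counit (R := k) (rlact (bB.coord U) x)
      = ∑ U, β (Coalgebra.counit (R := k) (rlact (bB.coord U) x) • bB U) := by
        exact Finset.sum_congr rfl fun U _ => by rw [map_smul, smul_eq_mul]; exact mul_comm _ _
    _ = β (∑ U, Coalgebra.counit (R := k) (rlact (bB.coord U) x) • bB U) := (map_sum β _ _).symm
    _ = β x := by rw [Heps2]

lemma counit_dualMul (bB : Module.Basis ι k B) (γ : Module.Dual k B) :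
    dualMul (Coalgebra.counit (R := k)) γ = γ := by
  ext x
  rw [dualMul_apply bB]
  calc ∑ U, Coalgebra.counit (R := k) (bB U) * γ (rlact (bB.coord U) x)
      = ∑ U, γ (Coalgebra.counit (R := k) (bB U) • rlact (bB.coord U) x) := by
        exact Finset.sum_congr rfl fun U _ => by rw [map_smul, smul_eq_mul]
    _ = γ (∑ U, Coalgebra.counit (R := k) (bB U) • rlact (bB.coord U) x) := (map_sum γ _ _).symm
    _ = γ x := by rw [Heps1]

lemma rlact_counit (bB : Module.Basis ι k B) (z : B) : rlact (Coalgebra.counit (R := k)) z = z := by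
  rw [rlact_expand bB]; exact Heps1 bB z

/-- `rlact` bundled as a linear map in the functional variable. -/
def rlactD : Module.Dual k B →ₗ[k] B →ₗ[k] B where
  toFun := rlact
  map_add' ν ν' := by
    ext z
    simp [rlact, TensorProduct.map_add_left, LinearMap.add_apply]
  map_smul' c ν := by
    ext z
    simp [rlact, TensorProduct.map_smul_left, LinearMap.smul_apply]

@[simp] lemma rlactD_apply (ν : Module.Dual k B) : rlactD ν = rlact ν := rfl

lemma Hmul2 {M : Type*} [AddCommMonoid M] [Module k M]
    (Φ : B →ₗ[k] B →ₗ[k] M) (x y : B) :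
    ∑ P, ∑ Q, Φ (bB P * bB Q) (rlact (bB.coord P) x * rlact (bB.coord Q) y)
      = ∑ W, Φ (bB W) (rlact (bB.coord W) (x * y)) := by
  rw [← lift_comul bB Φ (x * y)]
  have h : Coalgebra.comul (R := k) (x * y)
      = ∑ P, ∑ Q, (bB P * bB Q) ⊗ₜ[k] (rlact (bB.coord P) x * rlact (bB.coord Q) y) := by
    rw [Bialgebra.comul_mul, comul_expand bB x, comul_expand bB y, Finset.sum_mul_sum]
    exact Finset.sum_congr rfl fun P _ => Finset.sum_congr rfl fun Q _ =>
      Algebra.TensorProduct.tmul_mul_tmul _ _ _ _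
  rw [h, map_sum]
  exact Finset.sum_congr rfl fun P _ => by rw [map_sum]; simp

lemma Hcoassoc (a : B) :
    ∑ U, ∑ V, (bB V ⊗ₜ[k] rlact (bB.coord V) (bB U)) ⊗ₜ[k] rlact (bB.coord U) a
      = ∑ U, ∑ V, (bB U ⊗ₜ[k] bB V) ⊗ₜ[k] rlact (bB.coord V) (rlact (bB.coord U) a) := by
  have h1 : (Coalgebra.comul (R := k)).rTensor B (Coalgebra.comul a)
      = ∑ U, ∑ V, (bB V ⊗ₜ[k] rlact (bB.coord V) (bB U)) ⊗ₜ[k] rlact (bB.coord U) a := by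
    rw [comul_expand bB a, map_sum]
    exact Finset.sum_congr rfl fun U _ => by
      rw [LinearMap.rTensor_tmul, comul_expand bB (bB U), TensorProduct.sum_tmul]
  have h2 : (Coalgebra.comul (R := k)).lTensor B (Coalgebra.comul a)
      = ∑ U, ∑ V, bB U ⊗ₜ[k] (bB V ⊗ₜ[k] rlact (bB.coord V) (rlact (bB.coord U) a)) := by
    rw [comul_expand bB a, map_sum]
    exact Finset.sum_congr rfl fun U _ => by
      rw [LinearMap.lTensor_tmul, comul_expand bB (rlact (bB.coord U) a),
        TensorProduct.tmul_sum]
  have h3 := Coalgebra.coassoc_apply (R := k) a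
  calc ∑ U, ∑ V, (bB V ⊗ₜ[k] rlact (bB.coord V) (bB U)) ⊗ₜ[k] rlact (bB.coord U) a
      = (Coalgebra.comul (R := k)).rTensor B (Coalgebra.comul a) := h1.symm
    _ = (TensorProduct.assoc k B B B).symm
          ((Coalgebra.comul (R := k)).lTensor B (Coalgebra.comul a)) := by
        rw [← h3]; rw [LinearEquiv.symm_apply_apply]
    _ = ∑ U, ∑ V, (bB U ⊗ₜ[k] bB V) ⊗ₜ[k] rlact (bB.coord V) (rlact (bB.coord U) a) := by
        rw [h2, map_sum]
        exact Finset.sum_congr rfl fun U _ => by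
          rw [map_sum]
          exact Finset.sum_congr rfl fun V _ => by
            exact TensorProduct.assoc_symm_tmul _ _ _

end Chunk2
section Chunk3
variable {k B : Type*} [Field k] [Ring B] [HopfAlgebra k B]
variable {ι : Type*} [Fintype ι] (bB : Module.Basis ι k B)

/-- reorder: bring first summation variable innermost (3 sums). -/
lemma rot3 {M : Type*} [AddCommMonoid M] (f : ι → ι → ι → M) :
    ∑ a, ∑ b, ∑ c, f a b c = ∑ b, ∑ c, ∑ a, f a b c := by
  rw [Finset.sum_comm]
  exact Finset.sum_congr rfl fun b _ => Finset.sum_comm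

/-- reorder: bring first summation variable innermost (4 sums). -/
lemma rot4 {M : Type*} [AddCommMonoid M] (f : ι → ι → ι → ι → M) :
    ∑ a, ∑ b, ∑ c, ∑ d, f a b c d = ∑ b, ∑ c, ∑ d, ∑ a, f a b c d := by
  rw [Finset.sum_comm]
  exact Finset.sum_congr rfl fun b _ => rot3 (fun a c d => f a b c d)

/-- reorder: bring first summation variable innermost (5 sums). -/
lemma rot5 {M : Type*} [AddCommMonoid M] (f : ι → ι → ι → ι → ι → M) :
    ∑ a, ∑ b, ∑ c, ∑ d, ∑ e, f a b c d e
      = ∑ b, ∑ c, ∑ d, ∑ e, ∑ a, f a b c d e := by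
  rw [Finset.sum_comm]
  exact Finset.sum_congr rfl fun b _ => rot4 (fun a c d e => f a b c d e)

/-- collapse with counit-coefficients (from `Heps2`). -/
lemma epsF {M : Type*} [AddCommMonoid M] [Module k M] (F : B →ₗ[k] M) (a : B) :
    ∑ U, Coalgebra.counit (R := k) (rlact (bB.coord U) a) • F (bB U) = F a := by
  calc ∑ U, Coalgebra.counit (R := k) (rlact (bB.coord U) a) • F (bB U)
      = F (∑ U, Coalgebra.counit (R := k) (rlact (bB.coord U) a) • bB U) := by
        rw [map_sum]
        exact Finset.sum_congr rfl fun U _ => (map_smul F _ _).symm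
    _ = F a := by rw [Heps2]

/-- `(x ⊗ y) ⊗ z ↦ S'(x * v) * ((y * q) * (c * S' z))`. -/
def Gmap (S' : B →ₗ[k] B) (v q c : B) : (B ⊗[k] B) ⊗[k] B →ₗ[k] B :=
  (LinearMap.mul' k B) ∘ₗ
    (TensorProduct.map (S' ∘ₗ LinearMap.mulRight k v)
      ((LinearMap.mul' k B) ∘ₗ
        TensorProduct.map (LinearMap.mulRight k q) ((LinearMap.mulLeft k c) ∘ₗ S'))) ∘ₗ
    (TensorProduct.assoc k B B B).toLinearMap

@[simp] lemma Gmap_tmul (S' : B →ₗ[k] B) (v q c x y z : B) :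
    Gmap S' v q c ((x ⊗ₜ[k] y) ⊗ₜ[k] z) = S' (x * v) * ((y * q) * (c * S' z)) := by
  simp [Gmap, TensorProduct.assoc_tmul, TensorProduct.map_tmul, LinearMap.mul'_apply]

/-- `(x ⊗ y) ⊗ z ↦ S'(p * x) * ((w * y) * (S' z * c))`. -/
def Gmap2 (S' : B →ₗ[k] B) (p w c : B) : (B ⊗[k] B) ⊗[k] B →ₗ[k] B :=
  (LinearMap.mul' k B) ∘ₗ
    (TensorProduct.map (S' ∘ₗ LinearMap.mulLeft k p)
      ((LinearMap.mul' k B) ∘ₗ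
        TensorProduct.map (LinearMap.mulLeft k w) ((LinearMap.mulRight k c) ∘ₗ S'))) ∘ₗ
    (TensorProduct.assoc k B B B).toLinearMap

@[simp] lemma Gmap2_tmul (S' : B →ₗ[k] B) (p w c x y z : B) :
    Gmap2 S' p w c ((x ⊗ₜ[k] y) ⊗ₜ[k] z) = S' (p * x) * ((w * y) * (S' z * c)) := by
  simp [Gmap2, TensorProduct.assoc_tmul, TensorProduct.map_tmul, LinearMap.mul'_apply]

set_option maxHeartbeats 2000000 in
lemma antipode_antimul (bB : Module.Basis ι k B) (a b : B) :
    HopfAlgebra.antipode (R := k) (a * b)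
      = HopfAlgebra.antipode (R := k) b * HopfAlgebra.antipode (R := k) a := by
  set S : B →ₗ[k] B := HopfAlgebra.antipode (R := k) (A := B) with hS
  set ε : Module.Dual k B := Coalgebra.counit (R := k) (A := B) with hε
  have step0 : ∀ x y : B, ∑ P, ∑ Q,
      S (bB P * bB Q) * (rlact (bB.coord P) x * rlact (bB.coord Q) y)
        = (ε x * ε y) • (1 : B) := by
    intro x y
    have h := Hmul2 bB ((LinearMap.mul k B).comp S) x y
    simp only [LinearMap.comp_apply, LinearMap.mul_apply'] at h
    rw [h, hS, HS1 bB (x * y)]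
    rw [hε, Bialgebra.counit_mul]
  have step2a : ∀ x y : B, ∑ P, ∑ Q,
      (bB P * bB Q) * (S (rlact (bB.coord Q) y) * S (rlact (bB.coord P) x))
        = (ε x * ε y) • (1 : B) := by
    intro x y
    calc ∑ P, ∑ Q, (bB P * bB Q) * (S (rlact (bB.coord Q) y) * S (rlact (bB.coord P) x))
        = ∑ P, bB P * ((∑ Q, bB Q * S (rlact (bB.coord Q) y)) * S (rlact (bB.coord P) x)) := by
          exact Finset.sum_congr rfl fun P _ => by
            rw [Finset.sum_mul, Finset.mul_sum]
            exact Finset.sum_congr rfl fun Q _ => by simp only [mul_assoc]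
      _ = ∑ P, bB P * ((ε y • (1 : B)) * S (rlact (bB.coord P) x)) := by
          exact Finset.sum_congr rfl fun P _ => by rw [hS, HS2 bB y]
      _ = ε y • ∑ P, bB P * S (rlact (bB.coord P) x) := by
          rw [Finset.smul_sum]
          exact Finset.sum_congr rfl fun P _ => by
            rw [smul_mul_assoc, one_mul, mul_smul_comm]
      _ = ε y • (ε x • (1 : B)) := by rw [hS, HS2 bB x]
      _ = (ε x * ε y) • (1 : B) := by rw [smul_smul, mul_comm]
  have step1 : S (a * b) = ∑ U, ∑ V,
      (ε (rlact (bB.coord U) a) * ε (rlact (bB.coord V) b)) • S (bB U * bB V) := by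
    conv_lhs => rw [← Heps2 bB a, ← Heps2 bB b]
    rw [Finset.sum_mul_sum, map_sum]
    exact Finset.sum_congr rfl fun U _ => by
      rw [map_sum]
      exact Finset.sum_congr rfl fun V _ => by
        rw [smul_mul_assoc, mul_smul_comm, map_smul, map_smul, smul_smul]
  calc S (a * b)
      = ∑ U, ∑ V, (ε (rlact (bB.coord U) a) * ε (rlact (bB.coord V) b)) • S (bB U * bB V) :=
        step1
    _ = ∑ U, ∑ V, S (bB U * bB V) * (∑ P, ∑ Q, (bB P * bB Q) *
          (S (rlact (bB.coord Q) (rlact (bB.coord V) b)) *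
            S (rlact (bB.coord P) (rlact (bB.coord U) a)))) := by
        exact Finset.sum_congr rfl fun U _ => Finset.sum_congr rfl fun V _ => by
          rw [step2a (rlact (bB.coord U) a) (rlact (bB.coord V) b), mul_smul_comm, mul_one]
    _ = ∑ U, ∑ V, ∑ P, ∑ Q, S (bB U * bB V) * ((bB P * bB Q) *
          (S (rlact (bB.coord Q) (rlact (bB.coord V) b)) *
            S (rlact (bB.coord P) (rlact (bB.coord U) a)))) := by
        exact Finset.sum_congr rfl fun U _ => Finset.sum_congr rfl fun V _ => by
          rw [Finset.mul_sum]
          exact Finset.sum_congr rfl fun P _ => by rw [Finset.mul_sum]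
    _ = ∑ V, ∑ Q, ∑ U, ∑ P, S (bB U * bB V) * ((bB P * bB Q) *
          (S (rlact (bB.coord Q) (rlact (bB.coord V) b)) *
            S (rlact (bB.coord P) (rlact (bB.coord U) a)))) := by
        rw [rot4 (fun U V P Q => S (bB U * bB V) * ((bB P * bB Q) *
          (S (rlact (bB.coord Q) (rlact (bB.coord V) b)) *
            S (rlact (bB.coord P) (rlact (bB.coord U) a)))))]
        exact Finset.sum_congr rfl fun V _ =>
          rot3 (fun P Q U => S (bB U * bB V) * ((bB P * bB Q) *
            (S (rlact (bB.coord Q) (rlact (bB.coord V) b)) *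
              S (rlact (bB.coord P) (rlact (bB.coord U) a)))))
    _ = ∑ V, ∑ Q, ∑ U, ∑ P, S (bB P * bB V) * ((rlact (bB.coord P) (bB U) * bB Q) *
          (S (rlact (bB.coord Q) (rlact (bB.coord V) b)) * S (rlact (bB.coord U) a))) := by
        exact Finset.sum_congr rfl fun V _ => Finset.sum_congr rfl fun Q _ => by
          have h := congrArg (Gmap S (bB V) (bB Q)
            (S (rlact (bB.coord Q) (rlact (bB.coord V) b)))) (Hcoassoc bB a)
          simp only [map_sum, Gmap_tmul] at h
          exact h.symm
    _ = ∑ U, ∑ P, ∑ V, ∑ Q, S (bB P * bB V) * ((rlact (bB.coord P) (bB U) * bB Q) *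
          (S (rlact (bB.coord Q) (rlact (bB.coord V) b)) * S (rlact (bB.coord U) a))) := by
        rw [rot4 (fun V Q U P => S (bB P * bB V) * ((rlact (bB.coord P) (bB U) * bB Q) *
          (S (rlact (bB.coord Q) (rlact (bB.coord V) b)) * S (rlact (bB.coord U) a))))]
        rw [rot4 (fun Q U P V => S (bB P * bB V) * ((rlact (bB.coord P) (bB U) * bB Q) *
          (S (rlact (bB.coord Q) (rlact (bB.coord V) b)) * S (rlact (bB.coord U) a))))]
    _ = ∑ U, ∑ P, ∑ V, ∑ Q, S (bB P * bB Q) *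
          ((rlact (bB.coord P) (bB U) * rlact (bB.coord Q) (bB V)) *
            (S (rlact (bB.coord V) b) * S (rlact (bB.coord U) a))) := by
        exact Finset.sum_congr rfl fun U _ => Finset.sum_congr rfl fun P _ => by
          have h := congrArg (Gmap2 S (bB P) (rlact (bB.coord P) (bB U))
            (S (rlact (bB.coord U) a))) (Hcoassoc bB b)
          simp only [map_sum, Gmap2_tmul] at h
          exact h.symm
    _ = ∑ U, ∑ V, ∑ P, ∑ Q, (S (bB P * bB Q) *
          (rlact (bB.coord P) (bB U) * rlact (bB.coord Q) (bB V))) *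
            (S (rlact (bB.coord V) b) * S (rlact (bB.coord U) a)) := by
        refine Finset.sum_congr rfl fun U _ => ?_
        rw [rot3 (fun P V Q => S (bB P * bB Q) *
          ((rlact (bB.coord P) (bB U) * rlact (bB.coord Q) (bB V)) *
            (S (rlact (bB.coord V) b) * S (rlact (bB.coord U) a))))]
        refine Finset.sum_congr rfl fun V _ => ?_
        rw [Finset.sum_comm]
        exact Finset.sum_congr rfl fun P _ => Finset.sum_congr rfl fun Q _ => by
          simp only [mul_assoc]
    _ = ∑ U, ∑ V, (ε (bB U) * ε (bB V)) • (S (rlact (bB.coord V) b) * S (rlact (bB.coord U) a)) := by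
        refine Finset.sum_congr rfl fun U _ => Finset.sum_congr rfl fun V _ => ?_
        calc ∑ P, ∑ Q, (S (bB P * bB Q) *
              (rlact (bB.coord P) (bB U) * rlact (bB.coord Q) (bB V))) *
                (S (rlact (bB.coord V) b) * S (rlact (bB.coord U) a))
            = (∑ P, ∑ Q, S (bB P * bB Q) *
                (rlact (bB.coord P) (bB U) * rlact (bB.coord Q) (bB V))) *
                  (S (rlact (bB.coord V) b) * S (rlact (bB.coord U) a)) := by
              rw [Finset.sum_mul]
              exact Finset.sum_congr rfl fun P _ => (Finset.sum_mul _ _ _).symm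
          _ = (ε (bB U) * ε (bB V)) •
                (S (rlact (bB.coord V) b) * S (rlact (bB.coord U) a)) := by
              rw [step0 (bB U) (bB V), smul_mul_assoc, one_mul]
    _ = (∑ V, ε (bB V) • S (rlact (bB.coord V) b)) * (∑ U, ε (bB U) • S (rlact (bB.coord U) a)) := by
        rw [Finset.sum_mul_sum, Finset.sum_comm]
        exact Finset.sum_congr rfl fun U _ => Finset.sum_congr rfl fun V _ => by
          rw [smul_mul_assoc, mul_smul_comm, smul_smul, mul_comm (ε (bB V))]
    _ = S b * S a := by
        have key : ∀ z : B, ∑ V, ε (bB V) • S (rlact (bB.coord V) z) = S z := by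
          intro z
          calc ∑ V, ε (bB V) • S (rlact (bB.coord V) z)
              = S (∑ V, ε (bB V) • rlact (bB.coord V) z) := by
                rw [map_sum]
                exact Finset.sum_congr rfl fun V _ => (map_smul S _ _).symm
            _ = S z := congrArg S (Heps1 bB z)
        rw [key b, key a]

end Chunk3


section Chunk4
variable {k B : Type*} [Field k] [Ring B] [HopfAlgebra k B]
variable {ι : Type*} [Fintype ι]

lemma HSinv1 (bB : Module.Basis ι k B) (Sinv : B →ₗ[k] B)
    (hSinv : ∀ x : B, HopfAlgebra.antipode (R := k) (Sinv x) = x ∧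
      Sinv (HopfAlgebra.antipode (R := k) x) = x) (a : B) :
    ∑ V, rlact (bB.coord V) a * Sinv (bB V)
      = Coalgebra.counit (R := k) a • (1 : B) := by
  have hinj : Function.Injective (HopfAlgebra.antipode (R := k) (A := B)) := by
    intro x y h
    rw [← (hSinv x).2, h, (hSinv y).2]
  apply hinj
  rw [map_sum, map_smul, antipode_one']
  calc ∑ V, HopfAlgebra.antipode (R := k) (rlact (bB.coord V) a * Sinv (bB V))
      = ∑ V, bB V * HopfAlgebra.antipode (R := k) (rlact (bB.coord V) a) := by
        refine Finset.sum_congr rfl fun V _ => ?_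
        rw [antipode_antimul bB, (hSinv (bB V)).1]
    _ = Coalgebra.counit (R := k) a • (1 : B) := HS2 bB a

lemma TermB_sum (bB : Module.Basis ι k B) (α : Module.Dual k B) (I : ι) :
    ∑ U, ∑ V, lact (bB V) α ⊗ₜ[k] (rlact (bB.coord V) (bB U) *
        HopfAlgebra.antipode (R := k) (rlact (bB.coord U) (bB I)))
      = lact (bB I) α ⊗ₜ[k] (1 : B) := by
  let G : (B ⊗[k] B) ⊗[k] B →ₗ[k] (Module.Dual k B ⊗[k] B) :=
    (TensorProduct.map (lactD α)
      ((LinearMap.mul' k B) ∘ₗ (LinearMap.lTensor B (HopfAlgebra.antipode (R := k))))) ∘ₗ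
      (TensorProduct.assoc k B B B).toLinearMap
  have hG : ∀ x y z : B, G ((x ⊗ₜ[k] y) ⊗ₜ[k] z)
      = lact x α ⊗ₜ[k] (y * HopfAlgebra.antipode (R := k) z) := by
    intro x y z
    simp [G, TensorProduct.assoc_tmul, TensorProduct.map_tmul, LinearMap.lTensor_tmul,
      LinearMap.mul'_apply]
  have h := congrArg G (Hcoassoc bB (bB I))
  simp only [map_sum] at h
  simp only [hG] at h
  calc ∑ U, ∑ V, lact (bB V) α ⊗ₜ[k] (rlact (bB.coord V) (bB U) *
        HopfAlgebra.antipode (R := k) (rlact (bB.coord U) (bB I)))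
      = ∑ U, ∑ V, lact (bB U) α ⊗ₜ[k] (bB V *
          HopfAlgebra.antipode (R := k) (rlact (bB.coord V) (rlact (bB.coord U) (bB I)))) := h
    _ = ∑ U, lact (bB U) α ⊗ₜ[k] (∑ V, bB V *
          HopfAlgebra.antipode (R := k) (rlact (bB.coord V) (rlact (bB.coord U) (bB I)))) := by
        exact Finset.sum_congr rfl fun U _ => (TensorProduct.tmul_sum _ _ _).symm
    _ = ∑ U, lact (bB U) α ⊗ₜ[k]
          (Coalgebra.counit (R := k) (rlact (bB.coord U) (bB I)) • (1 : B)) := by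
        exact Finset.sum_congr rfl fun U _ => by rw [HS2 bB]
    _ = ∑ U, Coalgebra.counit (R := k) (rlact (bB.coord U) (bB I)) •
          (lact (bB U) α ⊗ₜ[k] (1 : B)) := by
        exact Finset.sum_congr rfl fun U _ => (TensorProduct.tmul_smul _ _ _)
    _ = lact (bB I) α ⊗ₜ[k] (1 : B) := by
        simpa using epsF bB
          (((TensorProduct.mk k (Module.Dual k B) B).flip 1) ∘ₗ lactD α) (bB I)

lemma E2 (bB : Module.Basis ι k B) (Sinv : B →ₗ[k] B)
    (hSinv1 : ∀ a : B, ∑ V, rlact (bB.coord V) a * Sinv (bB V)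
      = Coalgebra.counit (R := k) a • (1 : B)) (b : B) :
    ∑ Q, ∑ R, (bB R * Sinv (bB Q)) ⊗ₜ[k] rlact (bB.coord R) (rlact (bB.coord Q) b)
      = (1 : B) ⊗ₜ[k] b := by
  let G : (B ⊗[k] B) ⊗[k] B →ₗ[k] (B ⊗[k] B) :=
    TensorProduct.map ((LinearMap.mul' k B) ∘ₗ (TensorProduct.comm k B B).toLinearMap ∘ₗ
      (LinearMap.rTensor B Sinv)) LinearMap.id
  have hG : ∀ x y z : B, G ((x ⊗ₜ[k] y) ⊗ₜ[k] z) = (y * Sinv x) ⊗ₜ[k] z := by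
    intro x y z
    simp [G, TensorProduct.map_tmul, LinearMap.rTensor_tmul, TensorProduct.comm_tmul,
      LinearMap.mul'_apply]
  have h := congrArg G (Hcoassoc bB b)
  simp only [map_sum] at h
  simp only [hG] at h
  calc ∑ Q, ∑ R, (bB R * Sinv (bB Q)) ⊗ₜ[k] rlact (bB.coord R) (rlact (bB.coord Q) b)
      = ∑ Q, ∑ R, (rlact (bB.coord R) (bB Q) * Sinv (bB R)) ⊗ₜ[k] rlact (bB.coord Q) b :=
        h.symm
    _ = ∑ Q, (∑ R, rlact (bB.coord R) (bB Q) * Sinv (bB R)) ⊗ₜ[k] rlact (bB.coord Q) b := by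
        exact Finset.sum_congr rfl fun Q _ => (TensorProduct.sum_tmul _ _ _).symm
    _ = ∑ Q, (Coalgebra.counit (R := k) (bB Q) • (1 : B)) ⊗ₜ[k] rlact (bB.coord Q) b := by
        exact Finset.sum_congr rfl fun Q _ => by rw [hSinv1 (bB Q)]
    _ = (1 : B) ⊗ₜ[k] (∑ Q, Coalgebra.counit (R := k) (bB Q) • rlact (bB.coord Q) b) := by
        rw [TensorProduct.tmul_sum]
        exact Finset.sum_congr rfl fun Q _ => (TensorProduct.smul_tmul _ _ _)
    _ = (1 : B) ⊗ₜ[k] b := by rw [Heps1]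

lemma E3 (bB : Module.Basis ι k B) (Sinv : B →ₗ[k] B)
    (hSinv1 : ∀ a : B, ∑ V, rlact (bB.coord V) a * Sinv (bB V)
      = Coalgebra.counit (R := k) a • (1 : B)) (x : B) :
    ∑ U, ∑ V, (rlact (bB.coord U) x * Sinv (rlact (bB.coord V) (bB U))) ⊗ₜ[k] bB V
      = (1 : B) ⊗ₜ[k] x := by
  let G : (B ⊗[k] B) ⊗[k] B →ₗ[k] (B ⊗[k] B) :=
    (TensorProduct.map ((LinearMap.mul' k B) ∘ₗ (LinearMap.lTensor B Sinv)) LinearMap.id) ∘ₗ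
      (TensorProduct.assoc k B B B).symm.toLinearMap ∘ₗ
      (LinearMap.lTensor B (TensorProduct.comm k B B).toLinearMap) ∘ₗ
      (TensorProduct.comm k (B ⊗[k] B) B).toLinearMap
  have hG : ∀ p q z : B, G ((p ⊗ₜ[k] q) ⊗ₜ[k] z) = (z * Sinv q) ⊗ₜ[k] p := by
    intro p q z
    simp [G, TensorProduct.comm_tmul, LinearMap.lTensor_tmul, TensorProduct.assoc_symm_tmul,
      TensorProduct.map_tmul, LinearMap.mul'_apply]
  have h := congrArg G (Hcoassoc bB x)
  simp only [map_sum] at h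
  simp only [hG] at h
  calc ∑ U, ∑ V, (rlact (bB.coord U) x * Sinv (rlact (bB.coord V) (bB U))) ⊗ₜ[k] bB V
      = ∑ U, ∑ V, (rlact (bB.coord V) (rlact (bB.coord U) x) * Sinv (bB V)) ⊗ₜ[k] bB U := h
    _ = ∑ U, (∑ V, rlact (bB.coord V) (rlact (bB.coord U) x) * Sinv (bB V)) ⊗ₜ[k] bB U := by
        exact Finset.sum_congr rfl fun U _ => (TensorProduct.sum_tmul _ _ _).symm
    _ = ∑ U, (Coalgebra.counit (R := k) (rlact (bB.coord U) x) • (1 : B)) ⊗ₜ[k] bB U := by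
        exact Finset.sum_congr rfl fun U _ => by rw [hSinv1]
    _ = (1 : B) ⊗ₜ[k] (∑ U, Coalgebra.counit (R := k) (rlact (bB.coord U) x) • bB U) := by
        rw [TensorProduct.tmul_sum]
        exact Finset.sum_congr rfl fun U _ => (TensorProduct.smul_tmul _ _ _)
    _ = (1 : B) ⊗ₜ[k] x := by rw [Heps2]

end Chunk4


section Chunk5
variable {k B : Type*} [Field k] [Ring B] [HopfAlgebra k B]
variable {ι : Type*} [Fintype ι]

lemma dcollapse' (bB : Module.Basis ι k B) (T : Module.Dual k B →ₗ[k] k) (ν : Module.Dual k B) :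
    ∑ I, ν (bB I) * T (bB.coord I) = T ν := by
  simpa [smul_eq_mul] using dcollapse bB T ν

set_option maxHeartbeats 4000000 in
lemma core (bB : Module.Basis ι k B) (Sinv : B →ₗ[k] B)
    (hSinv1 : ∀ a : B, ∑ V, rlact (bB.coord V) a * Sinv (bB V)
      = Coalgebra.counit (R := k) a • (1 : B))
    (α ω : Module.Dual k B) (b x : B) :
    ∑ I, ∑ J, ∑ K, ∑ P,
      dualMul (dualMul ((bB.coord I).comp (LinearMap.mulLeft k (bB J * bB K)))
          ((bB.coord K).comp Sinv)) (lact (bB P) (lact (bB I) α)) x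
        * ω (rlact (bB.coord P) (rlact ((bB.coord J).comp Sinv) b))
      = α x * ω b := by
  -- closed form of the double sum over K, I of the dual factor
  have hD : ∀ J P : ι, (∑ K, ∑ I,
      dualMul (dualMul ((bB.coord I).comp (LinearMap.mulLeft k (bB J * bB K)))
          ((bB.coord K).comp Sinv)) (lact (bB P) (lact (bB I) α)) x)
      = ∑ U, ∑ V, α ((rlact (bB.coord U) x * bB P) *
          ((bB J * Sinv (rlact (bB.coord V) (bB U))) * bB V)) := by
    intro J P
    have hexp : ∀ K I : ι,
        dualMul (dualMul ((bB.coord I).comp (LinearMap.mulLeft k (bB J * bB K)))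
            ((bB.coord K).comp Sinv)) (lact (bB P) (lact (bB I) α)) x
          = ∑ U, ∑ V, (bB.coord I ((bB J * bB K) * bB V) *
              bB.coord K (Sinv (rlact (bB.coord V) (bB U)))) *
                α ((rlact (bB.coord U) x * bB P) * bB I) := by
      intro K I
      rw [dualMul_apply bB]
      refine Finset.sum_congr rfl fun U _ => ?_
      rw [dualMul_apply bB, Finset.sum_mul]
      refine Finset.sum_congr rfl fun V _ => ?_
      simp only [LinearMap.comp_apply, LinearMap.mulLeft_apply, lact_apply]
    calc ∑ K, ∑ I,
        dualMul (dualMul ((bB.coord I).comp (LinearMap.mulLeft k (bB J * bB K)))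
            ((bB.coord K).comp Sinv)) (lact (bB P) (lact (bB I) α)) x
        = ∑ K, ∑ I, ∑ U, ∑ V, (bB.coord I ((bB J * bB K) * bB V) *
            bB.coord K (Sinv (rlact (bB.coord V) (bB U)))) *
              α ((rlact (bB.coord U) x * bB P) * bB I) := by
          exact Finset.sum_congr rfl fun K _ => Finset.sum_congr rfl fun I _ => hexp K I
      _ = ∑ U, ∑ V, ∑ K, ∑ I, (bB.coord I ((bB J * bB K) * bB V) *
            bB.coord K (Sinv (rlact (bB.coord V) (bB U)))) *
              α ((rlact (bB.coord U) x * bB P) * bB I) := by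
          rw [rot4 (fun K I U V => (bB.coord I ((bB J * bB K) * bB V) *
            bB.coord K (Sinv (rlact (bB.coord V) (bB U)))) *
              α ((rlact (bB.coord U) x * bB P) * bB I))]
          rw [rot4 (fun I U V K => (bB.coord I ((bB J * bB K) * bB V) *
            bB.coord K (Sinv (rlact (bB.coord V) (bB U)))) *
              α ((rlact (bB.coord U) x * bB P) * bB I))]
      _ = ∑ U, ∑ V, ∑ K, bB.coord K (Sinv (rlact (bB.coord V) (bB U))) *
            α ((rlact (bB.coord U) x * bB P) * ((bB J * bB K) * bB V)) := by
          refine Finset.sum_congr rfl fun U _ => Finset.sum_congr rfl fun V _ =>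
            Finset.sum_congr rfl fun K _ => ?_
          calc ∑ I, (bB.coord I ((bB J * bB K) * bB V) *
                bB.coord K (Sinv (rlact (bB.coord V) (bB U)))) *
                  α ((rlact (bB.coord U) x * bB P) * bB I)
              = bB.coord K (Sinv (rlact (bB.coord V) (bB U))) *
                  ∑ I, bB.coord I ((bB J * bB K) * bB V) *
                    (α.comp (LinearMap.mulLeft k (rlact (bB.coord U) x * bB P))) (bB I) := by
                rw [Finset.mul_sum]
                refine Finset.sum_congr rfl fun I _ => ?_
                simp only [LinearMap.comp_apply, LinearMap.mulLeft_apply]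
                ring
            _ = bB.coord K (Sinv (rlact (bB.coord V) (bB U))) *
                  α ((rlact (bB.coord U) x * bB P) * ((bB J * bB K) * bB V)) := by
                rw [collapse' bB (α.comp (LinearMap.mulLeft k (rlact (bB.coord U) x * bB P)))
                  ((bB J * bB K) * bB V)]
                simp only [LinearMap.comp_apply, LinearMap.mulLeft_apply]
      _ = ∑ U, ∑ V, α ((rlact (bB.coord U) x * bB P) *
            ((bB J * Sinv (rlact (bB.coord V) (bB U))) * bB V)) := by
          refine Finset.sum_congr rfl fun U _ => Finset.sum_congr rfl fun V _ => ?_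
          have h := collapse' bB
            (α.comp ((LinearMap.mulLeft k (rlact (bB.coord U) x * bB P)).comp
              ((LinearMap.mulRight k (bB V)).comp (LinearMap.mulLeft k (bB J)))))
            (Sinv (rlact (bB.coord V) (bB U)))
          simpa only [LinearMap.comp_apply, LinearMap.mulLeft_apply,
            LinearMap.mulRight_apply] using h
  -- expansion of the second factor
  have hw : ∀ J P : ι, ω (rlact (bB.coord P) (rlact ((bB.coord J).comp Sinv) b))
      = ∑ Q, bB.coord J (Sinv (bB Q)) * ω (rlact (bB.coord P) (rlact (bB.coord Q) b)) := by
    intro J P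
    rw [rlact_expand bB ((bB.coord J).comp Sinv) b, map_sum, map_sum]
    exact Finset.sum_congr rfl fun Q _ => by
      rw [map_smul, map_smul, smul_eq_mul, LinearMap.comp_apply]
  calc ∑ I, ∑ J, ∑ K, ∑ P,
      dualMul (dualMul ((bB.coord I).comp (LinearMap.mulLeft k (bB J * bB K)))
          ((bB.coord K).comp Sinv)) (lact (bB P) (lact (bB I) α)) x
        * ω (rlact (bB.coord P) (rlact ((bB.coord J).comp Sinv) b))
      = ∑ J, ∑ P, (∑ K, ∑ I,
          dualMul (dualMul ((bB.coord I).comp (LinearMap.mulLeft k (bB J * bB K)))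
            ((bB.coord K).comp Sinv)) (lact (bB P) (lact (bB I) α)) x)
          * ω (rlact (bB.coord P) (rlact ((bB.coord J).comp Sinv) b)) := by
        rw [rot4 (fun I J K P =>
          dualMul (dualMul ((bB.coord I).comp (LinearMap.mulLeft k (bB J * bB K)))
              ((bB.coord K).comp Sinv)) (lact (bB P) (lact (bB I) α)) x
            * ω (rlact (bB.coord P) (rlact ((bB.coord J).comp Sinv) b)))]
        refine Finset.sum_congr rfl fun J _ => ?_
        rw [rot3 (fun K P I =>
          dualMul (dualMul ((bB.coord I).comp (LinearMap.mulLeft k (bB J * bB K)))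
              ((bB.coord K).comp Sinv)) (lact (bB P) (lact (bB I) α)) x
            * ω (rlact (bB.coord P) (rlact ((bB.coord J).comp Sinv) b)))]
        refine Finset.sum_congr rfl fun P _ => ?_
        rw [Finset.sum_comm]
        conv_rhs => rw [Finset.sum_mul]
        refine Finset.sum_congr rfl fun K _ => (Finset.sum_mul _ _ _).symm
    _ = ∑ J, ∑ P, (∑ U, ∑ V, α ((rlact (bB.coord U) x * bB P) *
          ((bB J * Sinv (rlact (bB.coord V) (bB U))) * bB V)))
          * (∑ Q, bB.coord J (Sinv (bB Q)) * ω (rlact (bB.coord P) (rlact (bB.coord Q) b))) := by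
        exact Finset.sum_congr rfl fun J _ => Finset.sum_congr rfl fun P _ => by
          rw [hD J P, hw J P]
    _ = ∑ J, ∑ P, ∑ U, ∑ V, ∑ Q, α ((rlact (bB.coord U) x * bB P) *
          ((bB J * Sinv (rlact (bB.coord V) (bB U))) * bB V))
          * (bB.coord J (Sinv (bB Q)) * ω (rlact (bB.coord P) (rlact (bB.coord Q) b))) := by
        refine Finset.sum_congr rfl fun J _ => Finset.sum_congr rfl fun P _ => ?_
        rw [Finset.sum_mul]
        refine Finset.sum_congr rfl fun U _ => ?_
        rw [Finset.sum_mul]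
        refine Finset.sum_congr rfl fun V _ => ?_
        rw [Finset.mul_sum]
    _ = ∑ P, ∑ U, ∑ V, ∑ Q, ∑ J, α ((rlact (bB.coord U) x * bB P) *
          ((bB J * Sinv (rlact (bB.coord V) (bB U))) * bB V))
          * (bB.coord J (Sinv (bB Q)) * ω (rlact (bB.coord P) (rlact (bB.coord Q) b))) :=
        rot5 _
    _ = ∑ P, ∑ U, ∑ V, ∑ Q, α ((rlact (bB.coord U) x * bB P) *
          ((Sinv (bB Q) * Sinv (rlact (bB.coord V) (bB U))) * bB V))
          * ω (rlact (bB.coord P) (rlact (bB.coord Q) b)) := by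
        refine Finset.sum_congr rfl fun P _ => Finset.sum_congr rfl fun U _ =>
          Finset.sum_congr rfl fun V _ => Finset.sum_congr rfl fun Q _ => ?_
        calc ∑ J, α ((rlact (bB.coord U) x * bB P) *
              ((bB J * Sinv (rlact (bB.coord V) (bB U))) * bB V))
              * (bB.coord J (Sinv (bB Q)) * ω (rlact (bB.coord P) (rlact (bB.coord Q) b)))
            = ω (rlact (bB.coord P) (rlact (bB.coord Q) b)) *
                ∑ J, bB.coord J (Sinv (bB Q)) *
                  (α.comp ((LinearMap.mulLeft k (rlact (bB.coord U) x * bB P)).comp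
                    ((LinearMap.mulRight k (bB V)).comp
                      (LinearMap.mulRight k (Sinv (rlact (bB.coord V) (bB U))))))) (bB J) := by
              rw [Finset.mul_sum]
              refine Finset.sum_congr rfl fun J _ => ?_
              simp only [LinearMap.comp_apply, LinearMap.mulLeft_apply,
                LinearMap.mulRight_apply]
              ring
          _ = α ((rlact (bB.coord U) x * bB P) *
                ((Sinv (bB Q) * Sinv (rlact (bB.coord V) (bB U))) * bB V))
                * ω (rlact (bB.coord P) (rlact (bB.coord Q) b)) := by
              rw [collapse' bB _ (Sinv (bB Q))]
              simp only [LinearMap.comp_apply, LinearMap.mulLeft_apply,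
                LinearMap.mulRight_apply]
              ring
    _ = ∑ U, ∑ V, ∑ Q, ∑ P, α ((rlact (bB.coord U) x * bB P) *
          ((Sinv (bB Q) * Sinv (rlact (bB.coord V) (bB U))) * bB V))
          * ω (rlact (bB.coord P) (rlact (bB.coord Q) b)) :=
        rot4 _
    _ = ∑ U, ∑ V, ∑ Q, ω (rlact
          (α.comp ((LinearMap.mulRight k ((Sinv (bB Q) * Sinv (rlact (bB.coord V) (bB U))) * bB V)).comp
            (LinearMap.mulLeft k (rlact (bB.coord U) x))))
          (rlact (bB.coord Q) b)) := by
        refine Finset.sum_congr rfl fun U _ => Finset.sum_congr rfl fun V _ =>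
          Finset.sum_congr rfl fun Q _ => ?_
        have h := dcollapse' bB
          (ω.comp ((rlactD (k := k) (B := B)).flip (rlact (bB.coord Q) b)))
          (α.comp ((LinearMap.mulRight k
              ((Sinv (bB Q) * Sinv (rlact (bB.coord V) (bB U))) * bB V)).comp
            (LinearMap.mulLeft k (rlact (bB.coord U) x))))
        simpa only [LinearMap.comp_apply, LinearMap.flip_apply, rlactD_apply,
          LinearMap.mulRight_apply, LinearMap.mulLeft_apply] using h
    _ = ∑ U, ∑ V, ∑ Q, ∑ R, α ((rlact (bB.coord U) x * bB R) *
          ((Sinv (bB Q) * Sinv (rlact (bB.coord V) (bB U))) * bB V))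
          * ω (rlact (bB.coord R) (rlact (bB.coord Q) b)) := by
        refine Finset.sum_congr rfl fun U _ => Finset.sum_congr rfl fun V _ =>
          Finset.sum_congr rfl fun Q _ => ?_
        rw [rlact_expand bB _ (rlact (bB.coord Q) b), map_sum]
        refine Finset.sum_congr rfl fun R _ => ?_
        rw [map_smul, smul_eq_mul]
        simp only [LinearMap.comp_apply, LinearMap.mulRight_apply, LinearMap.mulLeft_apply]
    _ = ∑ U, ∑ V, α (rlact (bB.coord U) x * (Sinv (rlact (bB.coord V) (bB U)) * bB V)) * ω b := by
        refine Finset.sum_congr rfl fun U _ => Finset.sum_congr rfl fun V _ => ?_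
        have hψ : ∀ (p z : B),
            TensorProduct.lift ((LinearMap.mul k k).compl₁₂
              (α.comp ((LinearMap.mulLeft k (rlact (bB.coord U) x)).comp
                (LinearMap.mulRight k (Sinv (rlact (bB.coord V) (bB U)) * bB V)))) ω)
              (p ⊗ₜ[k] z)
            = α (rlact (bB.coord U) x * (p * (Sinv (rlact (bB.coord V) (bB U)) * bB V))) * ω z := by
          intro p z
          simp [LinearMap.compl₁₂_apply, LinearMap.comp_apply, LinearMap.mulLeft_apply,
            LinearMap.mulRight_apply, mul_assoc]
        have h2 := congrArg (TensorProduct.lift ((LinearMap.mul k k).compl₁₂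
          (α.comp ((LinearMap.mulLeft k (rlact (bB.coord U) x)).comp
            (LinearMap.mulRight k (Sinv (rlact (bB.coord V) (bB U)) * bB V)))) ω))
          (E2 bB Sinv hSinv1 b)
        simp only [map_sum] at h2
        simp only [hψ] at h2
        calc ∑ Q, ∑ R, α ((rlact (bB.coord U) x * bB R) *
              ((Sinv (bB Q) * Sinv (rlact (bB.coord V) (bB U))) * bB V))
              * ω (rlact (bB.coord R) (rlact (bB.coord Q) b))
            = ∑ Q, ∑ R, α (rlact (bB.coord U) x * ((bB R * Sinv (bB Q)) *
                (Sinv (rlact (bB.coord V) (bB U)) * bB V)))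
                * ω (rlact (bB.coord R) (rlact (bB.coord Q) b)) := by
              refine Finset.sum_congr rfl fun Q _ => Finset.sum_congr rfl fun R _ => ?_
              simp only [mul_assoc]
          _ = α (rlact (bB.coord U) x * ((1 : B) *
                (Sinv (rlact (bB.coord V) (bB U)) * bB V))) * ω b := h2
          _ = α (rlact (bB.coord U) x * (Sinv (rlact (bB.coord V) (bB U)) * bB V)) * ω b := by
              rw [one_mul]
    _ = α x * ω b := by
        have hφ : ∀ (p q : B), (α.comp (LinearMap.mul' k B)) (p ⊗ₜ[k] q) = α (p * q) := by
          intro p q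
          simp [LinearMap.comp_apply, LinearMap.mul'_apply]
        have h3 := congrArg (α.comp (LinearMap.mul' k B)) (E3 bB Sinv hSinv1 x)
        simp only [map_sum] at h3
        simp only [hφ] at h3
        calc ∑ U, ∑ V, α (rlact (bB.coord U) x *
              (Sinv (rlact (bB.coord V) (bB U)) * bB V)) * ω b
            = (∑ U, ∑ V, α ((rlact (bB.coord U) x *
                Sinv (rlact (bB.coord V) (bB U))) * bB V)) * ω b := by
              rw [Finset.sum_mul]
              refine Finset.sum_congr rfl fun U _ => ?_
              rw [Finset.sum_mul]
              refine Finset.sum_congr rfl fun V _ => ?_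
              rw [mul_assoc]
          _ = α ((1 : B) * x) * ω b := by rw [h3]
          _ = α x * ω b := by rw [one_mul]

end Chunk5


section Main
variable {k B : Type*} [Field k] [Ring B] [HopfAlgebra k B]
variable {ι : Type*} [Fintype ι]

lemma counit_comp_Sinv (bB : Module.Basis ι k B) (Sinv : B →ₗ[k] B)
    (hSinv : ∀ x : B, HopfAlgebra.antipode (R := k) (Sinv x) = x ∧
      Sinv (HopfAlgebra.antipode (R := k) x) = x) :
    (Coalgebra.counit (R := k) (A := B)).comp Sinv = Coalgebra.counit (R := k) := by
  ext y
  calc Coalgebra.counit (R := k) (Sinv y)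
      = Coalgebra.counit (R := k) (HopfAlgebra.antipode (R := k) (Sinv y)) :=
        (counit_antipode' bB _).symm
    _ = Coalgebra.counit (R := k) y := by rw [(hSinv y).1]

lemma sum_pair {M : Type*} [AddCommMonoid M] {n : ℕ} (σ : Fin n ≃ ι × ι) (f : ι → ι → M) :
    ∑ i, f (σ i).1 (σ i).2 = ∑ J, ∑ K, f J K :=
  (Fintype.sum_equiv σ _ (fun p => f p.1 p.2) (fun _ => rfl)).trans
    (Fintype.sum_prod_type (f := fun p : ι × ι => f p.1 p.2))

/-- triple-product expansion of a coordinate functional. -/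
lemma coord_triple (bB : Module.Basis ι k B) (I : ι) (x y z : B) :
    bB.coord I (x * y * z)
      = ∑ J, ∑ K, bB.coord J x * bB.coord K y *
          ((bB.coord I).comp (LinearMap.mulLeft k (bB J * bB K))) z := by
  have hK : ∀ J : ι, ∑ K, bB.coord J x * bB.coord K y *
      ((bB.coord I).comp (LinearMap.mulLeft k (bB J * bB K))) z
      = bB.coord J x * bB.coord I ((bB J * y) * z) := by
    intro J
    have h := collapse' bB
      (bB.coord J x • ((bB.coord I).comp ((LinearMap.mulRight k z).comp
        (LinearMap.mulLeft k (bB J))))) y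
    simp only [LinearMap.smul_apply, LinearMap.comp_apply, LinearMap.mulRight_apply,
      LinearMap.mulLeft_apply, smul_eq_mul] at h
    calc ∑ K, bB.coord J x * bB.coord K y *
        ((bB.coord I).comp (LinearMap.mulLeft k (bB J * bB K))) z
        = ∑ K, bB.coord K y * (bB.coord J x * bB.coord I ((bB J * bB K) * z)) := by
          refine Finset.sum_congr rfl fun K _ => ?_
          simp only [LinearMap.comp_apply, LinearMap.mulLeft_apply]
          rw [mul_assoc]
          ring
      _ = bB.coord J x * bB.coord I ((bB J * y) * z) := h
  calc bB.coord I (x * y * z)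
      = ∑ J, bB.coord J x * bB.coord I ((bB J * y) * z) := by
        have h := collapse' bB
          ((bB.coord I).comp ((LinearMap.mulRight k z).comp (LinearMap.mulRight k y))) x
        simp only [LinearMap.comp_apply, LinearMap.mulRight_apply] at h
        exact h.symm
    _ = ∑ J, ∑ K, bB.coord J x * bB.coord K y *
          ((bB.coord I).comp (LinearMap.mulLeft k (bB J * bB K))) z := by
        exact Finset.sum_congr rfl fun J _ => (hK J).symm

end Main

end HalfR

open HalfR

theorem heisenberg_double_half_R_commutativity
    [FiniteDimensional k B]
    {ι : Type*} [Fintype ι] (bB : Module.Basis ι k B)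
    (S : B →ₗ[k] B) (hSdef : S = HopfAlgebra.antipode (R := k) (A := B))
    (Sinv : B →ₗ[k] B)
    (hSinv : ∀ x : B, S (Sinv x) = x ∧ Sinv (S x) = x)
    (hmul : (Module.Dual k B ⊗[k] B) →ₗ[k] (Module.Dual k B ⊗[k] B) →ₗ[k]
        (Module.Dual k B ⊗[k] B))
    (hmul_def : ∀ (α β : Module.Dual k B) (a b : B) (n : ℕ) (a1 a2 : Fin n → B),
        Coalgebra.comul (R := k) a = ∑ i, a1 i ⊗ₜ[k] a2 i →
        hmul (α ⊗ₜ[k] a) (β ⊗ₜ[k] b)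
          = ∑ i, (dualMul α (lact (a1 i) β)) ⊗ₜ[k] (a2 i * b))
    (act : (Module.Dual k B ⊗[k] B) →ₗ[k] (Module.Dual k B ⊗[k] B) →ₗ[k]
        (Module.Dual k B ⊗[k] B))
    (act_def : ∀ (μ : Module.Dual k B) (m : B) (α : Module.Dual k B) (a : B)
        (N : ℕ) (μ1 μ2 μ3 : Fin N → Module.Dual k B)
        (_ : ∀ x y z : B, μ (x * y * z) = ∑ i, μ1 i x * μ2 i y * μ3 i z)
        (M : ℕ) (m1 m2 m3 : Fin M → B)
        (_ : (TensorProduct.map (Coalgebra.comul (R := k)) LinearMap.id)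
              (Coalgebra.comul (R := k) m) = ∑ j, (m1 j ⊗ₜ[k] m2 j) ⊗ₜ[k] m3 j),
        act (μ ⊗ₜ[k] m) (α ⊗ₜ[k] a)
          = ∑ i, ∑ j,
              (dualMul (dualMul (μ3 i) (lact (m1 j) α)) ((μ2 i).comp Sinv))
                ⊗ₜ[k] (rlact ((μ1 i).comp Sinv) (m2 j * a * S (m3 j)))) :
    -- `(R⁽²⁾ ▷ (ε # b))(R⁽¹⁾ ▷ (α # 1)) = α # b`, with
    -- `R = ∑_I (ε ⊗ e_I) ⊗ (e^I ⊗ 1)`, `R⁽¹⁾ = ε ⊗ e_I`, `R⁽²⁾ = e^I ⊗ 1`.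
    ∀ (α : Module.Dual k B) (b : B),
      ∑ I : ι,
        hmul
          (act ((bB.coord I : Module.Dual k B) ⊗ₜ[k] (1 : B))
            ((Coalgebra.counit : Module.Dual k B) ⊗ₜ[k] b))
          (act ((Coalgebra.counit : Module.Dual k B) ⊗ₜ[k] bB I)
            (α ⊗ₜ[k] (1 : B)))
        = α ⊗ₜ[k] b := by
  
  intro α b
  classical
  subst hSdef
  have hSinv1 := HSinv1 bB Sinv hSinv
  set σ : Fin (Fintype.card (ι × ι)) ≃ ι × ι := (Fintype.equivFin (ι × ι)).symm with hσ
  set τ : Fin (Fintype.card ι) ≃ ι := (Fintype.equivFin ι).symm with hτ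
  -- Term A
  have hTA : ∀ I : ι,
      act (bB.coord I ⊗ₜ[k] (1 : B)) ((Coalgebra.counit : Module.Dual k B) ⊗ₜ[k] b)
        = ∑ J, ∑ K, dualMul ((bB.coord I).comp (LinearMap.mulLeft k (bB J * bB K)))
            ((bB.coord K).comp Sinv) ⊗ₜ[k] rlact ((bB.coord J).comp Sinv) b := by
    intro I
    have h := act_def (bB.coord I) 1 Coalgebra.counit b
      (Fintype.card (ι × ι))
      (fun i => bB.coord (σ i).1) (fun i => bB.coord (σ i).2)
      (fun i => (bB.coord I).comp (LinearMap.mulLeft k (bB (σ i).1 * bB (σ i).2)))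
      (fun x y z => by
        rw [coord_triple bB I x y z]
        exact (sum_pair σ (fun J K => bB.coord J x * bB.coord K y *
          ((bB.coord I).comp (LinearMap.mulLeft k (bB J * bB K))) z)).symm)
      1 (fun _ => 1) (fun _ => 1) (fun _ => 1)
      (by
        rw [Bialgebra.comul_one (R := k) (A := B), Algebra.TensorProduct.one_def,
          TensorProduct.map_tmul]
        simp [Bialgebra.comul_one (R := k) (A := B), Algebra.TensorProduct.one_def])
    rw [h]
    simp only [Fin.sum_univ_one, lact_one, dualMul_counit bB, antipode_one', mul_one, one_mul]
    exact sum_pair σ (fun J K =>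
      dualMul ((bB.coord I).comp (LinearMap.mulLeft k (bB J * bB K)))
        ((bB.coord K).comp Sinv) ⊗ₜ[k] rlact ((bB.coord J).comp Sinv) b)
  -- Term B
  have hTB : ∀ I : ι,
      act ((Coalgebra.counit : Module.Dual k B) ⊗ₜ[k] bB I) (α ⊗ₜ[k] (1 : B))
        = lact (bB I) α ⊗ₜ[k] (1 : B) := by
    intro I
    have h := act_def Coalgebra.counit (bB I) α 1
      1 (fun _ => Coalgebra.counit) (fun _ => Coalgebra.counit) (fun _ => Coalgebra.counit)
      (fun x y z => by simp [Bialgebra.counit_mul])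
      (Fintype.card (ι × ι))
      (fun j => bB (σ j).2)
      (fun j => rlact (bB.coord (σ j).2) (bB (σ j).1))
      (fun j => rlact (bB.coord (σ j).1) (bB I))
      (by
        have hmid : TensorProduct.map (Coalgebra.comul (R := k)) LinearMap.id
            (Coalgebra.comul (R := k) (bB I))
            = ∑ U, ∑ V, (bB V ⊗ₜ[k] rlact (bB.coord V) (bB U)) ⊗ₜ[k]
                rlact (bB.coord U) (bB I) := by
          rw [comul_expand bB (bB I), map_sum]
          refine Finset.sum_congr rfl fun U _ => ?_
          rw [TensorProduct.map_tmul, comul_expand bB (bB U), TensorProduct.sum_tmul]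
          simp only [LinearMap.id_coe, id_eq]
        exact hmid.trans ((sum_pair σ (fun U V =>
          (bB V ⊗ₜ[k] rlact (bB.coord V) (bB U)) ⊗ₜ[k]
            rlact (bB.coord U) (bB I))).symm))
    rw [h]
    simp only [Fin.sum_univ_one]
    rw [counit_comp_Sinv bB Sinv hSinv]
    simp only [counit_dualMul bB, dualMul_counit bB, rlact_counit bB, mul_one]
    exact (sum_pair σ (fun U V => lact (bB V) α ⊗ₜ[k]
      (rlact (bB.coord V) (bB U) *
        HopfAlgebra.antipode (R := k) (rlact (bB.coord U) (bB I))))).trans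
      (TermB_sum bB α I)
  -- assembly
  calc ∑ I : ι, hmul
        (act (bB.coord I ⊗ₜ[k] (1 : B)) ((Coalgebra.counit : Module.Dual k B) ⊗ₜ[k] b))
        (act ((Coalgebra.counit : Module.Dual k B) ⊗ₜ[k] bB I) (α ⊗ₜ[k] (1 : B)))
      = ∑ I, ∑ J, ∑ K, hmul
          (dualMul ((bB.coord I).comp (LinearMap.mulLeft k (bB J * bB K)))
            ((bB.coord K).comp Sinv) ⊗ₜ[k] rlact ((bB.coord J).comp Sinv) b)
          (lact (bB I) α ⊗ₜ[k] (1 : B)) := by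
        refine Finset.sum_congr rfl fun I _ => ?_
        rw [hTA I, hTB I]
        simp only [map_sum, LinearMap.sum_apply]
    _ = ∑ I, ∑ J, ∑ K, ∑ P,
          dualMul (dualMul ((bB.coord I).comp (LinearMap.mulLeft k (bB J * bB K)))
            ((bB.coord K).comp Sinv)) (lact (bB P) (lact (bB I) α))
          ⊗ₜ[k] rlact (bB.coord P) (rlact ((bB.coord J).comp Sinv) b) := by
        refine Finset.sum_congr rfl fun I _ => Finset.sum_congr rfl fun J _ =>
          Finset.sum_congr rfl fun K _ => ?_
        rw [hmul_def _ (lact (bB I) α) (rlact ((bB.coord J).comp Sinv) b) 1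
          (Fintype.card ι) (fun p => bB (τ p))
          (fun p => rlact (bB.coord (τ p)) (rlact ((bB.coord J).comp Sinv) b))
          (by
            rw [comul_expand bB (rlact ((bB.coord J).comp Sinv) b)]
            exact (Equiv.sum_comp τ (fun P : ι => bB P ⊗ₜ[k]
              rlact (bB.coord P) (rlact ((bB.coord J).comp Sinv) b))).symm)]
        simp only [mul_one]
        exact Equiv.sum_comp τ (fun P : ι =>
          dualMul (dualMul ((bB.coord I).comp (LinearMap.mulLeft k (bB J * bB K)))
            ((bB.coord K).comp Sinv)) (lact (bB P) (lact (bB I) α))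
          ⊗ₜ[k] rlact (bB.coord P) (rlact ((bB.coord J).comp Sinv) b))
    _ = α ⊗ₜ[k] b := by
        refine ((bB.dualBasis.tensorProduct bB).ext_elem_iff).mpr ?_
        rintro ⟨X, W⟩
        simp only [map_sum, Finsupp.coe_finset_sum, Finset.sum_apply,
          Module.Basis.tensorProduct_repr_tmul_apply, Module.Basis.dualBasis_repr, smul_eq_mul]
        have hcore := core bB Sinv hSinv1 α (bB.coord W) b (bB X)
        simp only [Module.Basis.coord_apply] at hcore
        calc ∑ I, ∑ J, ∑ K, ∑ P,
            bB.repr (rlact (bB.coord P) (rlact ((bB.coord J).comp Sinv) b)) W *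
              dualMul (dualMul ((bB.coord I).comp (LinearMap.mulLeft k (bB J * bB K)))
                ((bB.coord K).comp Sinv)) (lact (bB P) (lact (bB I) α)) (bB X)
            = ∑ I, ∑ J, ∑ K, ∑ P,
              dualMul (dualMul ((bB.coord I).comp (LinearMap.mulLeft k (bB J * bB K)))
                ((bB.coord K).comp Sinv)) (lact (bB P) (lact (bB I) α)) (bB X) *
                bB.repr (rlact (bB.coord P) (rlact ((bB.coord J).comp Sinv) b)) W := by
              exact Finset.sum_congr rfl fun I _ => Finset.sum_congr rfl fun J _ =>
                Finset.sum_congr rfl fun K _ => Finset.sum_congr rfl fun P _ =>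
                  mul_comm _ _
          _ = α (bB X) * bB.repr b W := hcore
          _ = bB.repr b W * α (bB X) := mul_comm _ _
end
end

section
/- Let q be a primitive 2p-th root of unity and let A be the ℂ-algebra generated by z and ∂ with relations z^p = 0, ∂^p = 0, and ∂z = (q − q⁻¹)·1 + q⁻² z∂. Then A has dimension p² with basis {z^a ∂^b : 0 ≤ a, b ≤ p−1} and is isomorphic as a ℂ-algebra to the full matrix algebra Mat_p(ℂ). -/
/-!
STATEMENT 4: For `q = exp(iπ/p)` a primitive 2p-th root of unity, the ℂ-algebra
`ℂ_q[z,∂]` with relations `z^p = 0`, `∂^p = 0`, `∂z = (q−q⁻¹)·1 + q⁻² z∂` has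
dimension `p²` with basis `{z^a ∂^b : 0 ≤ a,b ≤ p−1}` and is isomorphic to `Mat_p(ℂ)`.
-/

noncomputable section

/-- Relations of `ℂ_q[z,∂]` on the free algebra on two generators `z = X 0`, `∂ = X 1`. -/
inductive cqRel (p : ℕ) (q : ℂ) : FreeAlgebra ℂ (Fin 2) → FreeAlgebra ℂ (Fin 2) → Prop
  | znil : cqRel p q ((FreeAlgebra.ι ℂ (0 : Fin 2)) ^ p) 0
  | dnil : cqRel p q ((FreeAlgebra.ι ℂ (1 : Fin 2)) ^ p) 0
  | dz : cqRel p q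
      (FreeAlgebra.ι ℂ (1 : Fin 2) * FreeAlgebra.ι ℂ (0 : Fin 2))
      ((q - q⁻¹) • (1 : FreeAlgebra ℂ (Fin 2)) +
        ((q ^ 2)⁻¹) • (FreeAlgebra.ι ℂ (0 : Fin 2) * FreeAlgebra.ι ℂ (1 : Fin 2)))

/-- The algebra `ℂ_q[z,∂]`. -/
def CqAlg (p : ℕ) (q : ℂ) : Type := RingQuot (cqRel p q)

instance (p : ℕ) (q : ℂ) : Ring (CqAlg p q) := inferInstanceAs (Ring (RingQuot (cqRel p q)))
instance (p : ℕ) (q : ℂ) : Algebra ℂ (CqAlg p q) :=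
  inferInstanceAs (Algebra ℂ (RingQuot (cqRel p q)))

/-- The generator `z` of `ℂ_q[z,∂]`. -/
def Zg (p : ℕ) (q : ℂ) : CqAlg p q :=
  RingQuot.mkAlgHom ℂ (cqRel p q) (FreeAlgebra.ι ℂ (0 : Fin 2))

/-- The generator `∂` of `ℂ_q[z,∂]`. -/
def Dg (p : ℕ) (q : ℂ) : CqAlg p q :=
  RingQuot.mkAlgHom ℂ (cqRel p q) (FreeAlgebra.ι ℂ (1 : Fin 2))


namespace CqAux

variable (p : ℕ) (q : ℂ)

/-- eigenvalue sequence -/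
def cc (k : ℕ) : ℂ := q * (1 - ((q ^ 2)⁻¹) ^ k)

/-- product of eigenvalues -/
def ww (i b : ℕ) : ℂ := ∏ t ∈ Finset.range b, cc q (i + 1 + t)

/-- matrix for z -/
def Zm : Matrix (Fin p) (Fin p) ℂ :=
  Matrix.of fun (i j : Fin p) => if (i : ℕ) = (j : ℕ) + 1 then 1 else 0

/-- matrix for ∂ -/
def Dm : Matrix (Fin p) (Fin p) ℂ :=
  Matrix.of fun (i j : Fin p) => if (i : ℕ) + 1 = (j : ℕ) then cc q (j : ℕ) else 0

lemma cc_zero : cc q 0 = 0 := by simp [cc]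

lemma cc_succ (hq0 : q ≠ 0) (k : ℕ) :
    cc q (k + 1) = (q - q⁻¹) + (q ^ 2)⁻¹ * cc q k := by
  unfold cc
  linear_combination (-q⁻¹) * mul_inv_cancel₀ hq0

lemma ww_succ (i b : ℕ) : ww q i (b + 1) = ww q i b * cc q (i + 1 + b) := by
  simp [ww, Finset.prod_range_succ]

lemma Zm_pow (a : ℕ) :
    Zm p ^ a = Matrix.of fun (i j : Fin p) => if (i : ℕ) = (j : ℕ) + a then 1 else 0 := by
  induction a with
  | zero =>
    ext i j
    simp [Matrix.one_apply, Fin.ext_iff]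
  | succ a ih =>
    rw [pow_succ, ih]
    ext i j
    rw [Matrix.mul_apply]
    have hip := i.isLt
    have hjp := j.isLt
    by_cases hj : (j : ℕ) + 1 < p
    · rw [Finset.sum_eq_single (⟨(j : ℕ) + 1, hj⟩ : Fin p)]
      · simp only [Matrix.of_apply, Zm, Fin.val_mk]
        split_ifs <;> first | ring1 | (exfalso; omega)
      · intro k _ hk
        have hkp := k.isLt
        simp only [Matrix.of_apply, Zm, Fin.val_mk]
        split_ifs with h1 h2 <;>
          first
            | ring1
            | exact absurd (Fin.ext (show (k : ℕ) = (j : ℕ) + 1 by omega)) hk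
      · simp
    · rw [Finset.sum_eq_zero, eq_comm, Matrix.of_apply, if_neg (by omega)]
      intro k _
      have hkp := k.isLt
      simp only [Matrix.of_apply, Zm, Fin.val_mk]
      split_ifs <;> first | ring1 | (exfalso; omega)

lemma Dm_pow (b : ℕ) :
    Dm p q ^ b =
      Matrix.of fun (i j : Fin p) =>
        if (j : ℕ) = (i : ℕ) + b then ww q (i : ℕ) b else 0 := by
  induction b with
  | zero =>
    ext i j
    simp [Matrix.one_apply, Fin.ext_iff, ww, eq_comm]
  | succ b ih =>
    rw [pow_succ, ih]
    ext i j
    rw [Matrix.mul_apply]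
    have hip := i.isLt
    have hjp := j.isLt
    by_cases hi : (i : ℕ) + b < p
    · rw [Finset.sum_eq_single (⟨(i : ℕ) + b, hi⟩ : Fin p)]
      · simp only [Matrix.of_apply, Dm, Fin.val_mk]
        split_ifs with h1 h2 h2 <;>
          first
            | ring1
            | (exfalso; omega)
            | (rw [ww_succ, show (j : ℕ) = (i : ℕ) + 1 + b by omega])
      · intro k _ hk
        have hkp := k.isLt
        simp only [Matrix.of_apply, Dm, Fin.val_mk]
        split_ifs with h1 h2 <;>
          first
            | ring1
            | exact absurd (Fin.ext (show (k : ℕ) = (i : ℕ) + b by omega)) hk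
      · simp
    · rw [Finset.sum_eq_zero, eq_comm, Matrix.of_apply, if_neg (by omega)]
      intro k _
      have hkp := k.isLt
      simp only [Matrix.of_apply, Dm, Fin.val_mk]
      split_ifs <;> first | ring1 | (exfalso; omega)


lemma ZD_entry (a b : ℕ) (i j : Fin p) :
    (Zm p ^ a * Dm p q ^ b) i j =
      if a ≤ (i : ℕ) ∧ (j : ℕ) + a = (i : ℕ) + b then ww q ((i : ℕ) - a) b else 0 := by
  rw [Zm_pow, Dm_pow, Matrix.mul_apply]
  have hip := i.isLt
  have hjp := j.isLt
  by_cases h : a ≤ (i : ℕ) ∧ (j : ℕ) + a = (i : ℕ) + b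
  · rw [if_pos h]
    rw [Finset.sum_eq_single (⟨(i : ℕ) - a, by omega⟩ : Fin p)]
    · simp only [Matrix.of_apply, Fin.val_mk]
      split_ifs <;> first | ring1 | (exfalso; omega)
    · intro k _ hk
      have hkp := k.isLt
      simp only [Matrix.of_apply, Fin.val_mk]
      split_ifs with h1 h2 <;>
        first
          | ring1
          | exact absurd (Fin.ext (show (k : ℕ) = (i : ℕ) - a by omega)) hk
    · simp
  · rw [if_neg h, Finset.sum_eq_zero]
    intro k _
    have hkp := k.isLt
    simp only [Matrix.of_apply]
    split_ifs <;> first | ring1 | (exfalso; omega)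

lemma ZD_diag : Zm p * Dm p q =
    Matrix.of fun (i j : Fin p) => if (i : ℕ) = (j : ℕ) then cc q (i : ℕ) else 0 := by
  ext i j
  rw [Matrix.mul_apply]
  have hip := i.isLt
  have hjp := j.isLt
  by_cases h : (i : ℕ) = (j : ℕ) ∧ 1 ≤ (i : ℕ)
  · rw [Finset.sum_eq_single (⟨(i : ℕ) - 1, by omega⟩ : Fin p)]
    · simp only [Matrix.of_apply, Zm, Dm, Fin.val_mk]
      split_ifs <;> first | ring1 | (exfalso; omega) | (rw [h.1]; ring1)
    · intro k _ hk
      have hkp := k.isLt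
      simp only [Matrix.of_apply, Zm, Dm, Fin.val_mk]
      split_ifs with h1 h2 <;>
        first
          | ring1
          | exact absurd (Fin.ext (show (k : ℕ) = (i : ℕ) - 1 by omega)) hk
    · simp
  · rw [Finset.sum_eq_zero, eq_comm, Matrix.of_apply]
    · split_ifs with h1
      · rw [show (i : ℕ) = 0 by omega, cc_zero]
      · rfl
    · intro k _
      have hkp := k.isLt
      simp only [Matrix.of_apply, Zm, Dm]
      split_ifs <;> first | ring1 | (exfalso; omega)

lemma DZ_diag (hcp : cc q p = 0) : Dm p q * Zm p =
    Matrix.of fun (i j : Fin p) => if (i : ℕ) = (j : ℕ) then cc q ((i : ℕ) + 1) else 0 := by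
  ext i j
  rw [Matrix.mul_apply]
  have hip := i.isLt
  have hjp := j.isLt
  by_cases h : (i : ℕ) = (j : ℕ) ∧ (i : ℕ) + 1 < p
  · rw [Finset.sum_eq_single (⟨(i : ℕ) + 1, h.2⟩ : Fin p)]
    · simp only [Matrix.of_apply, Zm, Dm, Fin.val_mk]
      split_ifs <;> first | ring1 | (exfalso; omega)
    · intro k _ hk
      have hkp := k.isLt
      simp only [Matrix.of_apply, Zm, Dm, Fin.val_mk]
      split_ifs with h1 h2 <;>
        first
          | ring1
          | exact absurd (Fin.ext (show (k : ℕ) = (i : ℕ) + 1 by omega)) hk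
    · simp
  · rw [Finset.sum_eq_zero, eq_comm, Matrix.of_apply]
    · split_ifs with h1
      · rw [show (i : ℕ) + 1 = p by omega, hcp]
      · rfl
    · intro k _
      have hkp := k.isLt
      simp only [Matrix.of_apply, Zm, Dm]
      split_ifs <;> first | ring1 | (exfalso; omega)

lemma rel_mat (hq0 : q ≠ 0) (hcp : cc q p = 0) :
    Dm p q * Zm p =
      (q - q⁻¹) • (1 : Matrix (Fin p) (Fin p) ℂ) + ((q ^ 2)⁻¹) • (Zm p * Dm p q) := by
  rw [DZ_diag p q hcp, ZD_diag]
  ext i j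
  simp only [Matrix.add_apply, Matrix.smul_apply, Matrix.one_apply, Matrix.of_apply,
    smul_eq_mul]
  by_cases h : (i : ℕ) = (j : ℕ)
  · rw [if_pos h, if_pos (Fin.ext h), if_pos h, cc_succ q hq0]
    ring
  · rw [if_neg h, if_neg h, if_neg (fun hh => h (congrArg Fin.val hh))]
    ring

lemma Zm_pow_p : Zm p ^ p = 0 := by
  rw [Zm_pow]
  ext i j
  have := i.isLt
  rw [Matrix.of_apply, if_neg (by omega), Matrix.zero_apply]

lemma Dm_pow_p : Dm p q ^ p = 0 := by
  rw [Dm_pow]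
  ext i j
  have := j.isLt
  rw [Matrix.of_apply, if_neg (by omega), Matrix.zero_apply]

lemma indep (hcc : ∀ s : ℕ, 0 < s → s < p → cc q s ≠ 0) :
    LinearIndependent ℂ
      (fun ab : Fin p × Fin p => Zm p ^ (ab.1 : ℕ) * Dm p q ^ (ab.2 : ℕ)) := by
  rw [Fintype.linearIndependent_iff]
  intro g hg
  suffices H : ∀ n : ℕ, ∀ ab : Fin p × Fin p, (ab.1 : ℕ) = n → g ab = 0 by
    intro ab; exact H (ab.1 : ℕ) ab rfl
  intro n
  induction n using Nat.strong_induction_on with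
  | _ n IH =>
  rintro ⟨a, b⟩ han
  have han' : (a : ℕ) = n := han
  have hap := a.isLt
  have hbp := b.isLt
  have h1 : ∑ ab : Fin p × Fin p,
      g ab * ((Zm p ^ (ab.1 : ℕ) * Dm p q ^ (ab.2 : ℕ)) a b) = 0 := by
    have := congrFun (congrFun hg a) b
    simpa [Matrix.sum_apply, Matrix.smul_apply] using this
  rw [Finset.sum_eq_single ((a, b) : Fin p × Fin p)] at h1
  · replace h1 : g (a, b) * ww q 0 (b : ℕ) = 0 := by
      simpa [ZD_entry, Nat.add_comm] using h1
    have hw : ww q 0 b ≠ 0 := by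
      rw [ww, Finset.prod_ne_zero_iff]
      intro t ht
      exact hcc (0 + 1 + t) (by omega) (by simp at ht; omega)
    exact (mul_eq_zero.mp h1).resolve_right hw
  · rintro ⟨a', b'⟩ _ hne
    rw [ZD_entry]
    by_cases hcnd : (a' : ℕ) ≤ (a : ℕ) ∧ (b : ℕ) + (a' : ℕ) = (a : ℕ) + (b' : ℕ)
    · rcases Nat.lt_or_ge (a' : ℕ) (a : ℕ) with hlt | hge
      · rw [IH (a' : ℕ) (by omega) (a', b') rfl, zero_mul]

      · exact absurd
          (by rw [show a' = a from Fin.ext (by omega), show b' = b from Fin.ext (by omega)])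
          hne
    · rw [if_neg hcnd, mul_zero]
  · intro habs
    exact absurd (Finset.mem_univ _) habs

end CqAux

section qfacts

open Complex in
lemma CqAux.q2_pow_eq (p : ℕ) {q : ℂ} (hq : q = Complex.exp (Real.pi * Complex.I / p))
    (s : ℕ) : (q ^ 2) ^ s = Complex.exp ((2 * s : ℕ) * (Real.pi * Complex.I / p)) := by
  rw [hq, ← pow_mul, ← Complex.exp_nat_mul]

lemma CqAux.q2p_eq_one (p : ℕ) (hp : 0 < p) {q : ℂ}
    (hq : q = Complex.exp (Real.pi * Complex.I / p)) : (q ^ 2) ^ p = 1 := by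
  rw [CqAux.q2_pow_eq p hq p]
  have hpc : (p : ℂ) ≠ 0 := Nat.cast_ne_zero.mpr hp.ne'
  have h : ((2 * p : ℕ) : ℂ) * (Real.pi * Complex.I / p) = 2 * Real.pi * Complex.I := by
    push_cast
    field_simp
  rw [h, Complex.exp_two_pi_mul_I]

lemma CqAux.q2s_ne_one (p : ℕ) {q : ℂ}
    (hq : q = Complex.exp (Real.pi * Complex.I / p)) (s : ℕ) (h1 : 0 < s) (h2 : s < p) :
    (q ^ 2) ^ s ≠ 1 := by
  have hp : 0 < p := h1.trans h2
  have hpc : (p : ℂ) ≠ 0 := Nat.cast_ne_zero.mpr hp.ne'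
  rw [CqAux.q2_pow_eq p hq s]
  intro hone
  rw [Complex.exp_eq_one_iff] at hone
  obtain ⟨n, hn⟩ := hone
  have h2pi : (2 * (Real.pi : ℂ) * Complex.I) ≠ 0 :=
    mul_ne_zero (mul_ne_zero two_ne_zero (Complex.ofReal_ne_zero.mpr Real.pi_ne_zero))
      Complex.I_ne_zero
  field_simp at hn
  have hkey : ((s : ℂ) - n * p) * (2 * (Real.pi : ℂ) * Complex.I) = 0 := by
    push_cast at hn
    linear_combination (↑Real.pi * Complex.I) * hn
  rcases mul_eq_zero.mp hkey with h | h
  · have hs : (s : ℂ) = (n : ℂ) * (p : ℂ) := sub_eq_zero.mp h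
    have hsz : (s : ℤ) = n * p := by exact_mod_cast hs
    have hpz : (0 : ℤ) < (p : ℤ) := by exact_mod_cast hp
    have hsz1 : (0 : ℤ) < (s : ℤ) := by exact_mod_cast h1
    have hsz2 : (s : ℤ) < (p : ℤ) := by exact_mod_cast h2
    rcases le_or_gt n 0 with hn0 | hn0
    · nlinarith
    · have hn1 : 1 ≤ n := hn0
      nlinarith
  · exact h2pi h

lemma CqAux.cc_p_eq_zero (p : ℕ) (hp : 0 < p) {q : ℂ}
    (hq : q = Complex.exp (Real.pi * Complex.I / p)) : CqAux.cc q p = 0 := by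
  rw [CqAux.cc, inv_pow, CqAux.q2p_eq_one p hp hq, inv_one, sub_self, mul_zero]

lemma CqAux.cc_ne_zero (p : ℕ) {q : ℂ}
    (hq : q = Complex.exp (Real.pi * Complex.I / p)) (s : ℕ) (h1 : 0 < s) (h2 : s < p) :
    CqAux.cc q s ≠ 0 := by
  rw [CqAux.cc]
  refine mul_ne_zero (hq ▸ Complex.exp_ne_zero _) ?_
  intro h
  exact CqAux.q2s_ne_one p hq s h1 h2
    (inv_eq_one.mp (by rw [← inv_pow]; exact (sub_eq_zero.mp h).symm))

end qfacts

namespace CqAux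

variable (p : ℕ) (q : ℂ)

lemma Zg_pow_p : Zg p q ^ p = 0 := by
  have h := RingQuot.mkAlgHom_rel ℂ (cqRel.znil (p := p) (q := q))
  rw [map_zero] at h
  exact (map_pow (RingQuot.mkAlgHom ℂ (cqRel p q)) _ p).symm.trans h

lemma Dg_pow_p : Dg p q ^ p = 0 := by
  have h := RingQuot.mkAlgHom_rel ℂ (cqRel.dnil (p := p) (q := q))
  rw [map_zero] at h
  exact (map_pow (RingQuot.mkAlgHom ℂ (cqRel p q)) _ p).symm.trans h

lemma DgZg : Dg p q * Zg p q =
    (q - q⁻¹) • (1 : CqAlg p q) + ((q ^ 2)⁻¹) • (Zg p q * Dg p q) := by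
  have h := RingQuot.mkAlgHom_rel ℂ (cqRel.dz (p := p) (q := q))
  rw [map_mul, map_add, map_smul, map_smul, map_one, map_mul] at h
  exact h

lemma Dg_pow_mul_Zg (b : ℕ) :
    Dg p q ^ (b + 1) * Zg p q =
      ((q - q⁻¹) * ∑ i ∈ Finset.range (b + 1), ((q ^ 2)⁻¹) ^ i) • Dg p q ^ b +
        (((q ^ 2)⁻¹) ^ (b + 1)) • (Zg p q * Dg p q ^ (b + 1)) := by
  induction b with
  | zero => simpa using DgZg p q
  | succ b ih =>
    have h1 : Dg p q ^ (b + 1 + 1) * Zg p q = Dg p q * (Dg p q ^ (b + 1) * Zg p q) := by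
      rw [← mul_assoc, ← pow_succ']
    rw [h1, ih, mul_add, mul_smul_comm, mul_smul_comm, ← pow_succ', ← mul_assoc,
      DgZg, add_mul, smul_mul_assoc, smul_mul_assoc, one_mul, mul_assoc,
      ← pow_succ', Finset.sum_range_succ (n := b + 1)]
    match_scalars <;> ring

/-- the spanning family -/
def vfam : Fin p × Fin p → CqAlg p q := fun ab => Zg p q ^ (ab.1 : ℕ) * Dg p q ^ (ab.2 : ℕ)

lemma mem_span (a b : ℕ) :
    Zg p q ^ a * Dg p q ^ b ∈ Submodule.span ℂ (Set.range (vfam p q)) := by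
  by_cases ha : a < p
  · by_cases hb : b < p
    · exact Submodule.subset_span ⟨(⟨a, ha⟩, ⟨b, hb⟩), rfl⟩
    · have h : Dg p q ^ b = 0 := by
        rw [show b = p + (b - p) by omega, pow_add, Dg_pow_p, zero_mul]
      rw [h, mul_zero]
      exact Submodule.zero_mem _
  · have h : Zg p q ^ a = 0 := by
      rw [show a = p + (a - p) by omega, pow_add, Zg_pow_p, zero_mul]
    rw [h, zero_mul]
    exact Submodule.zero_mem _

lemma vfam_mul_Zg (ab : Fin p × Fin p) :
    vfam p q ab * Zg p q ∈ Submodule.span ℂ (Set.range (vfam p q)) := by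
  obtain ⟨a, b⟩ := ab
  show Zg p q ^ (a : ℕ) * Dg p q ^ (b : ℕ) * Zg p q ∈ _
  rcases Nat.eq_zero_or_pos (b : ℕ) with hb | hb
  · rw [hb, pow_zero, mul_one, ← pow_succ]
    simpa using mem_span p q ((a : ℕ) + 1) 0
  · obtain ⟨m, hm⟩ : ∃ m, (b : ℕ) = m + 1 := ⟨(b : ℕ) - 1, by omega⟩
    rw [hm, mul_assoc, Dg_pow_mul_Zg, mul_add, mul_smul_comm, mul_smul_comm,
      ← mul_assoc, ← pow_succ]
    exact Submodule.add_mem _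
      (Submodule.smul_mem _ _ (mem_span p q (a : ℕ) m))
      (Submodule.smul_mem _ _ (mem_span p q ((a : ℕ) + 1) (m + 1)))

lemma vfam_mul_Dg (ab : Fin p × Fin p) :
    vfam p q ab * Dg p q ∈ Submodule.span ℂ (Set.range (vfam p q)) := by
  obtain ⟨a, b⟩ := ab
  show Zg p q ^ (a : ℕ) * Dg p q ^ (b : ℕ) * Dg p q ∈ _
  rw [mul_assoc, ← pow_succ]
  exact mem_span p q (a : ℕ) ((b : ℕ) + 1)

lemma span_mul_Zg {x : CqAlg p q} (hx : x ∈ Submodule.span ℂ (Set.range (vfam p q))) :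
    x * Zg p q ∈ Submodule.span ℂ (Set.range (vfam p q)) := by
  have hmap : (Submodule.span ℂ (Set.range (vfam p q))).map
      (LinearMap.mulRight ℂ (Zg p q)) ≤ Submodule.span ℂ (Set.range (vfam p q)) := by
    rw [Submodule.map_span, Submodule.span_le]
    rintro y ⟨y', ⟨ab, rfl⟩, rfl⟩
    exact vfam_mul_Zg p q ab
  exact hmap ⟨x, hx, rfl⟩

lemma span_mul_Dg {x : CqAlg p q} (hx : x ∈ Submodule.span ℂ (Set.range (vfam p q))) :
    x * Dg p q ∈ Submodule.span ℂ (Set.range (vfam p q)) := by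
  have hmap : (Submodule.span ℂ (Set.range (vfam p q))).map
      (LinearMap.mulRight ℂ (Dg p q)) ≤ Submodule.span ℂ (Set.range (vfam p q)) := by
    rw [Submodule.map_span, Submodule.span_le]
    rintro y ⟨y', ⟨ab, rfl⟩, rfl⟩
    exact vfam_mul_Dg p q ab
  exact hmap ⟨x, hx, rfl⟩

/-- quotient map as a plain function into `CqAlg` -/
def mk' : FreeAlgebra ℂ (Fin 2) → CqAlg p q := fun y => RingQuot.mkAlgHom ℂ (cqRel p q) y

lemma mk'_mul (y1 y2 : FreeAlgebra ℂ (Fin 2)) :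
    mk' p q (y1 * y2) = mk' p q y1 * mk' p q y2 :=
  map_mul (RingQuot.mkAlgHom ℂ (cqRel p q)) y1 y2

lemma mk'_add (y1 y2 : FreeAlgebra ℂ (Fin 2)) :
    mk' p q (y1 + y2) = mk' p q y1 + mk' p q y2 :=
  map_add (RingQuot.mkAlgHom ℂ (cqRel p q)) y1 y2

lemma mk'_algebraMap (r : ℂ) :
    mk' p q (algebraMap ℂ (FreeAlgebra ℂ (Fin 2)) r) = algebraMap ℂ (CqAlg p q) r :=
  AlgHom.commutes (RingQuot.mkAlgHom ℂ (cqRel p q)) r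

lemma span_vfam_top : Submodule.span ℂ (Set.range (vfam p q)) = ⊤ := by
  rw [eq_top_iff]
  rintro x -
  obtain ⟨y, rfl⟩ := RingQuot.mkAlgHom_surjective ℂ (cqRel p q) x
  have hone : (1 : CqAlg p q) ∈ Submodule.span ℂ (Set.range (vfam p q)) := by
    simpa using mem_span p q 0 0
  have main : ∀ y : FreeAlgebra ℂ (Fin 2),
      ∀ s ∈ Submodule.span ℂ (Set.range (vfam p q)),
        s * mk' p q y ∈ Submodule.span ℂ (Set.range (vfam p q)) := by
    intro y
    induction y using FreeAlgebra.induction with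
    | grade0 r =>
      intro s hs
      rw [mk'_algebraMap, ← Algebra.commutes, ← Algebra.smul_def]
      exact Submodule.smul_mem _ r hs
    | grade1 i =>
      intro s hs
      fin_cases i
      · exact span_mul_Zg p q hs
      · exact span_mul_Dg p q hs
    | mul y1 y2 ih1 ih2 =>
      intro s hs
      rw [mk'_mul, ← mul_assoc]
      exact ih2 _ (ih1 _ hs)
    | add y1 y2 ih1 ih2 =>
      intro s hs
      rw [mk'_add, mul_add]
      exact Submodule.add_mem _ (ih1 s hs) (ih2 s hs)
  have hfin := main y 1 hone
  rw [one_mul] at hfin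
  exact hfin

end CqAux

theorem cq_basis_and_matrix_algebra
    (p : ℕ) (hp : 2 ≤ p)
    (q : ℂ) (hq : q = Complex.exp (Real.pi * Complex.I / p)) :
    (∃ bas : Module.Basis (Fin p × Fin p) ℂ (CqAlg p q),
        ∀ ab : Fin p × Fin p,
          bas ab = Zg p q ^ (ab.1 : ℕ) * Dg p q ^ (ab.2 : ℕ)) ∧
      Module.finrank ℂ (CqAlg p q) = p ^ 2 ∧
      Nonempty (CqAlg p q ≃ₐ[ℂ] Matrix (Fin p) (Fin p) ℂ) := by
  have hp0 : 0 < p := by omega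
  have hq0 : q ≠ 0 := hq ▸ Complex.exp_ne_zero _
  have hcp : CqAux.cc q p = 0 := CqAux.cc_p_eq_zero p hp0 hq
  have hcc : ∀ s : ℕ, 0 < s → s < p → CqAux.cc q s ≠ 0 := fun s h1 h2 =>
    CqAux.cc_ne_zero p hq s h1 h2
  set F : FreeAlgebra ℂ (Fin 2) →ₐ[ℂ] Matrix (Fin p) (Fin p) ℂ :=
    FreeAlgebra.lift ℂ (fun i : Fin 2 => if i = 0 then CqAux.Zm p else CqAux.Dm p q) with hFdef
  have hF0 : F (FreeAlgebra.ι ℂ (0 : Fin 2)) = CqAux.Zm p := by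
    rw [hFdef, FreeAlgebra.lift_ι_apply, if_pos rfl]
  have hF1 : F (FreeAlgebra.ι ℂ (1 : Fin 2)) = CqAux.Dm p q := by
    rw [hFdef, FreeAlgebra.lift_ι_apply, if_neg (by decide)]
  have hF : ∀ ⦃x y⦄, cqRel p q x y → F x = F y := by
    intro x y h
    cases h with
    | znil => rw [map_pow, map_zero, hF0, CqAux.Zm_pow_p]
    | dnil => rw [map_pow, map_zero, hF1, CqAux.Dm_pow_p]
    | dz =>
      rw [map_mul, map_add, map_smul, map_smul, map_one, map_mul, hF0, hF1]
      exact CqAux.rel_mat p q hq0 hcp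
  set φ : CqAlg p q →ₐ[ℂ] Matrix (Fin p) (Fin p) ℂ :=
    RingQuot.liftAlgHom ℂ ⟨F, hF⟩ with hφdef
  have hφZ : φ (Zg p q) = CqAux.Zm p := by
    have h := RingQuot.liftAlgHom_mkAlgHom_apply (S := ℂ) F hF (FreeAlgebra.ι ℂ (0 : Fin 2))
    exact h.trans hF0
  have hφD : φ (Dg p q) = CqAux.Dm p q := by
    have h := RingQuot.liftAlgHom_mkAlgHom_apply (S := ℂ) F hF (FreeAlgebra.ι ℂ (1 : Fin 2))
    exact h.trans hF1
  have hφv : ∀ ab : Fin p × Fin p,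
      φ (CqAux.vfam p q ab) = CqAux.Zm p ^ (ab.1 : ℕ) * CqAux.Dm p q ^ (ab.2 : ℕ) := by
    intro ab
    show φ (Zg p q ^ (ab.1 : ℕ) * Dg p q ^ (ab.2 : ℕ)) = _
    rw [map_mul, map_pow, map_pow, hφZ, hφD]
  have hli' : LinearIndependent ℂ (fun ab : Fin p × Fin p => φ (CqAux.vfam p q ab)) := by
    have h := CqAux.indep p q hcc
    rwa [show (fun ab : Fin p × Fin p => φ (CqAux.vfam p q ab)) =
      fun ab : Fin p × Fin p => CqAux.Zm p ^ (ab.1 : ℕ) * CqAux.Dm p q ^ (ab.2 : ℕ) from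
      funext hφv]
  have hvli : LinearIndependent ℂ (CqAux.vfam p q) :=
    LinearIndependent.of_comp φ.toLinearMap hli'
  have hsp : ⊤ ≤ Submodule.span ℂ (Set.range (CqAux.vfam p q)) :=
    (CqAux.span_vfam_top p q).ge
  let bas : Module.Basis (Fin p × Fin p) ℂ (CqAlg p q) := Module.Basis.mk hvli hsp
  have hfr : Module.finrank ℂ (CqAlg p q) = p ^ 2 := by
    rw [Module.finrank_eq_card_basis bas, Fintype.card_prod, Fintype.card_fin, sq]
  have hFD : FiniteDimensional ℂ (CqAlg p q) := Module.Finite.of_basis bas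
  have hfrM : Module.finrank ℂ (Matrix (Fin p) (Fin p) ℂ) = p ^ 2 := by
    rw [Module.finrank_matrix, Fintype.card_fin, Module.finrank_self, mul_one, sq]
  have hsurj : Function.Surjective φ := by
    have hle : Submodule.span ℂ
        (Set.range fun ab : Fin p × Fin p => φ (CqAux.vfam p q ab)) ≤
        LinearMap.range φ.toLinearMap := by
      rw [Submodule.span_le]
      rintro y ⟨ab, rfl⟩
      exact ⟨CqAux.vfam p q ab, rfl⟩
    have hcard : Module.finrank ℂ (Submodule.span ℂ
        (Set.range fun ab : Fin p × Fin p => φ (CqAux.vfam p q ab))) = p ^ 2 := by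
      rw [finrank_span_eq_card hli', Fintype.card_prod, Fintype.card_fin, sq]
    have h1 : Module.finrank ℂ (LinearMap.range φ.toLinearMap) = p ^ 2 :=
      le_antisymm (hfrM ▸ Submodule.finrank_le _)
        (hcard ▸ Submodule.finrank_mono hle)
    have h2 : LinearMap.range φ.toLinearMap = ⊤ :=
      Submodule.eq_top_of_finrank_eq (by rw [h1, hfrM])
    intro m
    obtain ⟨x, hx⟩ := LinearMap.range_eq_top.mp h2 m
    exact ⟨x, hx⟩
  have hinj : Function.Injective φ := by
    have h := (LinearMap.injective_iff_surjective_of_finrank_eq_finrank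
      (f := φ.toLinearMap) (by rw [hfr, hfrM])).mpr (by simpa using hsurj)
    simpa using h
  refine ⟨⟨bas, fun ab => ?_⟩, hfr, ⟨AlgEquiv.ofBijective φ ⟨hinj, hsurj⟩⟩⟩
  rw [show bas = Module.Basis.mk hvli hsp from rfl, Module.Basis.mk_apply]
  rfl
end
end

section
/- Let B be the Taft Hopf algebra generated by E, k with kE = qEk, E^p = 0, k^{4p} = 1, where q = exp(iπ/p). Define F, κ ∈ B* by ⟨F, E^m k^n⟩ = δ_{m,1} q^{−n}/(q − q⁻¹) and ⟨κ, E^m k^n⟩ = δ_{m,0} q^{−n/2}. Then in B* one has κF = qFκ, F^p = 0, and κ^{4p} = ε (the unit of B*). -/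
/-!
STATEMENT 6: Let `B` be the Taft Hopf algebra (`kE = qEk`, `E^p = 0`, `k^{4p} = 1`,
`Δ(E) = 1⊗E + E⊗k²`, `Δ(k) = k⊗k`, `q = exp(iπ/p)`), with basis `E^m k^n`.  Define
`F, κ ∈ B*` by `⟨F, E^m k^n⟩ = δ_{m,1} q^{−n}/(q−q⁻¹)`, `⟨κ, E^m k^n⟩ = δ_{m,0} q^{−n/2}`.
Then in the dual (convolution) algebra `B*` one has `κF = qFκ`, `F^p = 0`, `κ^{4p} = ε`.
-/

open TensorProduct

noncomputable section

variable {T : Type*} [Ring T] [Algebra ℂ T]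

/-- Convolution product on `B*` dual to the comultiplication `Δ`. -/
def dualMulT (Δ : T →ₐ[ℂ] T ⊗[ℂ] T) (α β : Module.Dual ℂ T) : Module.Dual ℂ T :=
  (TensorProduct.lift ((LinearMap.mul ℂ ℂ).compl₁₂ α β)).comp Δ.toLinearMap

/-- Convolution powers in `B*`, with unit the counit. -/
def dualPow (Δ : T →ₐ[ℂ] T ⊗[ℂ] T) (ε0 f : Module.Dual ℂ T) : ℕ → Module.Dual ℂ T
  | 0 => ε0
  | n + 1 => dualMulT Δ f (dualPow Δ ε0 f n)

lemma comm_pow (q : ℂ) (E K : T) (h : K * E = q • (E * K)) :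
    ∀ a b : ℕ, K ^ a * E ^ b = q ^ (a * b) • (E ^ b * K ^ a) := by
  have h1 : ∀ b : ℕ, K * E ^ b = q ^ b • (E ^ b * K) := by
    intro b
    induction b with
    | zero => simp
    | succ b ih =>
      rw [pow_succ, ← mul_assoc, ih, smul_mul_assoc, mul_assoc, h, pow_succ]
      rw [mul_smul_comm, smul_smul, ← mul_assoc]
  intro a
  induction a with
  | zero => simp
  | succ a ih =>
    intro b
    rw [pow_succ, mul_assoc, h1 b, mul_smul_comm, ← mul_assoc, ih b,
      smul_mul_assoc, smul_smul, mul_assoc, ← pow_succ]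
    rw [← pow_add]
    ring_nf

theorem taft_dual_relations
    (p : ℕ) (hp : 2 ≤ p)
    (q q2 : ℂ)
    (hq : q = Complex.exp (Real.pi * Complex.I / p))
    (hq2 : q2 = Complex.exp (Real.pi * Complex.I / (2 * p)))
    (E K : T)
    (hcomm : K * E = q • (E * K)) (hEnil : E ^ p = 0) (hKord : K ^ (4 * p) = 1)
    (bas : Module.Basis (Fin p × ZMod (4 * p)) ℂ T)
    (hbas : ∀ mn : Fin p × ZMod (4 * p), bas mn = E ^ (mn.1 : ℕ) * K ^ mn.2.val)
    (Δ : T →ₐ[ℂ] T ⊗[ℂ] T)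
    (hΔE : Δ E = 1 ⊗ₜ[ℂ] E + E ⊗ₜ[ℂ] (K * K)) (hΔK : Δ K = K ⊗ₜ[ℂ] K)
    (εa : T →ₐ[ℂ] ℂ) (hεE : εa E = 0) (hεK : εa K = 1)
    (F κ : Module.Dual ℂ T)
    (hF : ∀ mn : Fin p × ZMod (4 * p),
      F (bas mn) = if (mn.1 : ℕ) = 1 then q ^ (-(mn.2.val : ℤ)) / (q - q⁻¹) else 0)
    (hκ : ∀ mn : Fin p × ZMod (4 * p),
      κ (bas mn) = if (mn.1 : ℕ) = 0 then q2 ^ (-(mn.2.val : ℤ)) else 0) :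
    dualMulT Δ κ F = q • dualMulT Δ F κ ∧
    dualPow Δ εa.toLinearMap F p = 0 ∧
    dualPow Δ εa.toLinearMap κ (4 * p) = εa.toLinearMap := by
  haveI : NeZero (4 * p) := ⟨by omega⟩
  haveI : NeZero p := ⟨by omega⟩
  haveI : Fact (1 < 4 * p) := ⟨by omega⟩
  have hpC : (p : ℂ) ≠ 0 := by exact Nat.cast_ne_zero.mpr (by omega)
  -- basic numerics
  have hq2ne : q2 ≠ 0 := by rw [hq2]; exact Complex.exp_ne_zero _
  have hqne : q ≠ 0 := by rw [hq]; exact Complex.exp_ne_zero _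
  have hqq2 : q = q2 ^ 2 := by
    rw [hq, hq2, ← Complex.exp_nat_mul]
    congr 1
    field_simp
    ring
  have hq2ord : q2 ^ (4 * p) = 1 := by
    rw [hq2, ← Complex.exp_nat_mul]
    have : ((4 * p : ℕ) : ℂ) * (Real.pi * Complex.I / (2 * p)) = 2 * Real.pi * Complex.I := by
      push_cast
      field_simp
      ring
    rw [this, Complex.exp_two_pi_mul_I]
  have hper : ∀ a b : ℤ, a % (4 * p) = b % (4 * p) → q2 ^ a = q2 ^ b := by
    intro a b hab
    have hdvd : ((4 * p : ℕ) : ℤ) ∣ b - a := Int.ModEq.dvd hab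
    obtain ⟨k, hk⟩ := hdvd
    have hb : b = a + (4 * p : ℕ) * k := by omega
    rw [hb, zpow_add₀ hq2ne, zpow_mul, zpow_natCast, hq2ord, one_zpow, mul_one]
  -- powers of K mod 4p
  have hKmod : ∀ a : ℕ, K ^ a = K ^ (a % (4 * p)) := by
    intro a
    conv_lhs => rw [← Nat.div_add_mod a (4 * p)]
    rw [pow_add, pow_mul, hKord, one_pow, one_mul]
  -- distinguished indices
  set e0 : Fin p := ⟨0, by omega⟩ with he0
  set e1 : Fin p := ⟨1, by omega⟩ with he1
  have hval2 : (2 : ZMod (4 * p)).val = 2 := by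
    have : ((2 : ℕ) : ZMod (4 * p)) = 2 := by push_cast; ring
    rw [← this, ZMod.val_natCast]
    exact Nat.mod_eq_of_lt (by omega)
  have hbas_one : (1 : T) = bas (e0, 0) := by
    rw [hbas]; simp [he0]
  have hbas_E : E = bas (e1, 0) := by
    rw [hbas]; simp [he1]
  have hbas_K : K = bas (e0, 1) := by
    rw [hbas]; simp [he0, ZMod.val_one]
  have hbas_KK : K * K = bas (e0, 2) := by
    rw [hbas]; simp [he0, hval2, sq]
  -- multiplication of basis elements
  have hmul : ∀ (m m' : Fin p) (n n' : ZMod (4 * p)),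
      bas (m, n) * bas (m', n') =
        if h : (m : ℕ) + (m' : ℕ) < p then
          (q ^ ((n.val) * (m' : ℕ))) • bas (⟨(m : ℕ) + (m' : ℕ), h⟩, n + n')
        else 0 := by
    intro m m' n n'
    rw [hbas, hbas]
    have : E ^ (m : ℕ) * K ^ n.val * (E ^ (m' : ℕ) * K ^ n'.val)
        = q ^ (n.val * (m' : ℕ)) • (E ^ ((m : ℕ) + (m' : ℕ)) * K ^ (n.val + n'.val)) := by
      rw [mul_assoc, ← mul_assoc (K ^ n.val), comm_pow q E K hcomm,
        smul_mul_assoc, mul_smul_comm]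
      congr 1
      rw [pow_add, pow_add]
      noncomm_ring
    rw [this]
    split_ifs with h
    · rw [hbas]
      have hkk : K ^ (n.val + n'.val) = K ^ ((n + n').val) := by
        rw [hKmod (n.val + n'.val), ZMod.val_add]
      rw [hkk]
    · push_neg at h
      have : E ^ ((m : ℕ) + (m' : ℕ)) = 0 := by
        have h2 : (m : ℕ) + (m' : ℕ) = p + ((m : ℕ) + (m' : ℕ) - p) := by omega
        rw [h2, pow_add, hEnil, zero_mul]
      rw [this, zero_mul, smul_zero]

  -- evaluation of the convolution pairing on pure tensors
  have hev : ∀ (α β : Module.Dual ℂ T) (x y : T),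
      TensorProduct.lift ((LinearMap.mul ℂ ℂ).compl₁₂ α β) (x ⊗ₜ[ℂ] y) = α x * β y := by
    intros α β x y
    simp [LinearMap.compl₁₂_apply]
  have hduale : ∀ (α β : Module.Dual ℂ T) (x : T),
      dualMulT Δ α β x = TensorProduct.lift ((LinearMap.mul ℂ ℂ).compl₁₂ α β) (Δ x) :=
    fun _ _ _ => rfl
  -- Δ on basis elements of E-degree 0 and 1
  have hΔbas0 : ∀ n : ZMod (4 * p), Δ (bas (e0, n)) = bas (e0, n) ⊗ₜ[ℂ] bas (e0, n) := by
    intro n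
    have hb : bas (e0, n) = K ^ n.val := by rw [hbas]; simp [he0]
    rw [hb, map_pow, hΔK, Algebra.TensorProduct.tmul_pow]
  have hvadd2 : ∀ n : ZMod (4 * p), (n + 2).val = (n.val + 2) % (4 * p) := by
    intro n; rw [ZMod.val_add, hval2]
  have hΔbas1 : ∀ n : ZMod (4 * p),
      Δ (bas (e1, n)) = bas (e0, n) ⊗ₜ[ℂ] bas (e1, n) + bas (e1, n) ⊗ₜ[ℂ] bas (e0, n + 2) := by
    intro n
    have hb : bas (e1, n) = E * K ^ n.val := by rw [hbas]; simp [he1]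
    have hb0 : bas (e0, n) = K ^ n.val := by rw [hbas]; simp [he0]
    have hb2 : bas (e0, n + 2) = K * K * K ^ n.val := by
      rw [hbas]
      have h2 : K * K * K ^ n.val = K ^ (2 + n.val) := by
        rw [pow_add, pow_two]
      have h3 : (n + 2).val = (2 + n.val) % (4 * p) := by rw [hvadd2]; ring_nf
      simp only [h2, h3]
      rw [← hKmod]
      simp [he0]
    rw [hb, map_mul, map_pow, hΔE, hΔK, Algebra.TensorProduct.tmul_pow, add_mul,
      Algebra.TensorProduct.tmul_mul_tmul, Algebra.TensorProduct.tmul_mul_tmul,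
      one_mul, hb0, hb2]
  -- the grading submodules
  set SS : ℕ → Submodule ℂ (T ⊗[ℂ] T) := fun m => Submodule.span ℂ
    {x | ∃ a b : Fin p, ∃ i j : ZMod (4 * p),
      (a : ℕ) + (b : ℕ) = m ∧ x = bas (a, i) ⊗ₜ[ℂ] bas (b, j)} with hSS
  have hSSgen : ∀ (m : ℕ) (a b : Fin p) (i j : ZMod (4 * p)), (a : ℕ) + (b : ℕ) = m →
      bas (a, i) ⊗ₜ[ℂ] bas (b, j) ∈ SS m := by
    intro m a b i j hab
    exact Submodule.subset_span ⟨a, b, i, j, hab, rfl⟩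
  have hSSmul : ∀ (m m' : ℕ) (x y : T ⊗[ℂ] T), x ∈ SS m → y ∈ SS m' →
      x * y ∈ SS (m + m') := by
    intro m m' x y hx hy
    induction hx using Submodule.span_induction with
    | mem x hxm =>
      induction hy using Submodule.span_induction with
      | mem y hym =>
        obtain ⟨a, b, i, j, hab, rfl⟩ := hxm
        obtain ⟨a', b', i', j', hab', rfl⟩ := hym
        rw [Algebra.TensorProduct.tmul_mul_tmul, hmul, hmul]
        split_ifs with h1 h2 h2
        · rw [← TensorProduct.smul_tmul', TensorProduct.tmul_smul]
          refine Submodule.smul_mem _ _ (Submodule.smul_mem _ _ ?_)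
          exact hSSgen _ _ _ _ _ (by simp only [Fin.val_mk]; omega)
        · simp only [TensorProduct.tmul_zero, smul_zero]; exact Submodule.zero_mem _
        · simp only [TensorProduct.zero_tmul]; exact Submodule.zero_mem _
        · simp only [TensorProduct.zero_tmul]; exact Submodule.zero_mem _
      | zero => rw [mul_zero]; exact Submodule.zero_mem _
      | add u v _ _ ihu ihv => rw [mul_add]; exact Submodule.add_mem _ ihu ihv
      | smul c u _ ihu => rw [mul_smul_comm]; exact Submodule.smul_mem _ _ ihu
    | zero => rw [zero_mul]; exact Submodule.zero_mem _
    | add u v _ _ ihu ihv => rw [add_mul]; exact Submodule.add_mem _ ihu ihv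
    | smul c u _ ihu => rw [smul_mul_assoc]; exact Submodule.smul_mem _ _ ihu
  have memE : Δ E ∈ SS 1 := by
    rw [hΔE]
    apply Submodule.add_mem
    · rw [hbas_one, hbas_E]
      exact hSSgen 1 e0 e1 0 0 (by simp [he0, he1])
    · rw [hbas_E, hbas_KK]
      exact hSSgen 1 e1 e0 0 2 (by simp [he0, he1])
  have memK : (K ⊗ₜ[ℂ] K : T ⊗[ℂ] T) ∈ SS 0 := by
    rw [hbas_K]; exact hSSgen 0 e0 e0 1 1 (by simp [he0])
  have mem1 : (1 : T ⊗[ℂ] T) ∈ SS 0 := by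
    have h1 : (1 : T ⊗[ℂ] T) = (1 : T) ⊗ₜ[ℂ] (1 : T) := rfl
    rw [h1, hbas_one]; exact hSSgen 0 e0 e0 0 0 (by simp [he0])
  have hΔmem : ∀ mn : Fin p × ZMod (4 * p), Δ (bas mn) ∈ SS (mn.1 : ℕ) := by
    intro mn
    rw [hbas mn, map_mul, map_pow, map_pow, hΔK]
    have hpowE : ∀ k : ℕ, (Δ E) ^ k ∈ SS k := by
      intro k
      induction k with
      | zero => simpa using mem1
      | succ k ih =>
        rw [pow_succ]
        exact hSSmul k 1 _ _ ih memE
    have hpowK : ∀ k : ℕ, ((K ⊗ₜ[ℂ] K : T ⊗[ℂ] T)) ^ k ∈ SS 0 := by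
      intro k
      induction k with
      | zero => simpa using mem1
      | succ k ih =>
        rw [pow_succ]
        simpa using hSSmul 0 0 _ _ ih memK
    simpa using hSSmul (mn.1 : ℕ) 0 _ _ (hpowE _) (hpowK _)
  have hvanish : ∀ (α β : Module.Dual ℂ T) (m : ℕ),
      (∀ (a b : Fin p) (i j : ZMod (4 * p)), (a : ℕ) + (b : ℕ) = m →
        α (bas (a, i)) * β (bas (b, j)) = 0) →
      ∀ x ∈ SS m, TensorProduct.lift ((LinearMap.mul ℂ ℂ).compl₁₂ α β) x = 0 := by
    intro α β m hz x hx
    induction hx using Submodule.span_induction with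
    | mem x hxm =>
      obtain ⟨a, b, i, j, hab, rfl⟩ := hxm
      rw [hev]
      exact hz a b i j hab
    | zero => simp
    | add u v _ _ ihu ihv => rw [map_add, ihu, ihv, add_zero]
    | smul c u _ ihu => rw [map_smul, ihu, smul_zero]
  -- periодicity helper
  have hperN : ∀ a : ℕ, q2 ^ (-((a % (4 * p) : ℕ) : ℤ)) = q2 ^ (-(a : ℤ)) := by
    intro a
    apply hper
    have hdm := Nat.div_add_mod a (4 * p)
    have h4 : ((4 * p : ℕ) : ℤ) = 4 * (p : ℤ) := by push_cast; ring
    have : (-(a : ℤ)) = (-((a % (4 * p) : ℕ) : ℤ)) + (4 * (p : ℤ)) * (-(((a / (4 * p) : ℕ)) : ℤ)) := by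
      push_cast
      nlinarith [hdm]
    rw [this, Int.add_mul_emod_self_left]

  -- values on distinguished basis vectors
  have hκ00 : ∀ n : ZMod (4 * p), κ (bas (e0, n)) = q2 ^ (-(n.val : ℤ)) := by
    intro n; rw [hκ]; simp [he0]
  have hκ1n : ∀ n : ZMod (4 * p), κ (bas (e1, n)) = 0 := by
    intro n; rw [hκ]; simp [he1]
  have hF0n : ∀ n : ZMod (4 * p), F (bas (e0, n)) = 0 := by
    intro n; rw [hF]; simp [he0]
  have hF1n : ∀ n : ZMod (4 * p), F (bas (e1, n)) = q ^ (-(n.val : ℤ)) / (q - q⁻¹) := by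
    intro n; rw [hF]; simp [he1]
  have hqz : q = q2 ^ (2 : ℤ) := by rw [hqq2]; norm_cast
  have hkey : ∀ n : ZMod (4 * p),
      q2 ^ (-(n.val : ℤ)) = q * q2 ^ (-(((n + 2 : ZMod (4 * p)).val : ℤ))) := by
    intro n
    rw [hqz, ← zpow_add₀ hq2ne]
    apply hper
    rw [hvadd2]
    have hdm := Nat.div_add_mod (n.val + 2) (4 * p)
    have hdm' : (4 * (p : ℤ)) * (((n.val + 2) / (4 * p) : ℕ) : ℤ)
        + (((n.val + 2) % (4 * p) : ℕ) : ℤ) = (n.val : ℤ) + 2 := by exact_mod_cast hdm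
    have h2 : ((2 : ℤ) + -(((n.val + 2) % (4 * p) : ℕ) : ℤ)) =
        (-(n.val : ℤ)) + (4 * (p : ℤ)) * (((n.val + 2) / (4 * p) : ℕ) : ℤ) := by linarith
    rw [h2, Int.add_mul_emod_self_left]
  -- CLAIM 1
  have claim1 : dualMulT Δ κ F = q • dualMulT Δ F κ := by
    apply bas.ext
    intro mn
    obtain ⟨m, n⟩ := mn
    rw [LinearMap.smul_apply, smul_eq_mul]
    by_cases h0 : (m : ℕ) = 0
    · have hm : m = e0 := by apply Fin.ext; simpa [he0] using h0
      rw [hm, hduale, hduale, hΔbas0 n, hev, hev]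
      simp only [hκ00, hF0n]
      ring
    · by_cases h1 : (m : ℕ) = 1
      · have hm : m = e1 := by apply Fin.ext; simpa [he1] using h1
        rw [hm, hduale, hduale, hΔbas1 n, map_add, map_add, hev, hev, hev, hev]
        simp only [hκ00, hκ1n, hF0n, hF1n]
        rw [hkey n]
        ring
      · have hL : dualMulT Δ κ F (bas (m, n)) = 0 := by
          rw [hduale]
          refine hvanish κ F (m : ℕ) ?_ _ (hΔmem (m, n))
          intro a b i j hab
          by_cases ha : (a : ℕ) = 0
          · by_cases hb : (b : ℕ) = 1
            · omega
            · rw [hF (b, j)]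
              exact mul_eq_zero_of_right _ (if_neg hb)
          · rw [hκ (a, i)]
            exact mul_eq_zero_of_left (if_neg ha) _
        have hR : dualMulT Δ F κ (bas (m, n)) = 0 := by
          rw [hduale]
          refine hvanish F κ (m : ℕ) ?_ _ (hΔmem (m, n))
          intro a b i j hab
          by_cases ha : (a : ℕ) = 1
          · by_cases hb : (b : ℕ) = 0
            · omega
            · rw [hκ (b, j)]
              exact mul_eq_zero_of_right _ (if_neg hb)
          · rw [hF (a, i)]
            exact mul_eq_zero_of_left (if_neg ha) _
        rw [hL, hR, mul_zero]
  -- CLAIM 2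
  have claim2 : dualPow Δ εa.toLinearMap F p = 0 := by
    have hFlt : ∀ (k : ℕ) (mn : Fin p × ZMod (4 * p)), (mn.1 : ℕ) < k →
        dualPow Δ εa.toLinearMap F k (bas mn) = 0 := by
      intro k
      induction k with
      | zero => intro mn h; exact absurd h (Nat.not_lt_zero _)
      | succ k ih =>
        intro mn hm
        show dualMulT Δ F (dualPow Δ εa.toLinearMap F k) (bas mn) = 0
        rw [hduale]
        refine hvanish F _ (mn.1 : ℕ) ?_ _ (hΔmem mn)
        intro a b i j hab
        by_cases ha : (a : ℕ) = 1
        · rw [ih (b, j) (by show (b : ℕ) < k; omega), mul_zero]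
        · rw [hF (a, i)]
          exact mul_eq_zero_of_left (if_neg ha) _
    apply bas.ext
    intro mn
    rw [LinearMap.zero_apply]
    exact hFlt p mn mn.1.isLt
  -- CLAIM 3
  have hκ_one : κ (1 : T) = 1 := by
    rw [hbas_one, hκ]
    simp [he0]
  have hq2addmul : ∀ n n' : ZMod (4 * p),
      q2 ^ (-(((n + n').val : ℤ))) = q2 ^ (-(n.val : ℤ)) * q2 ^ (-(n'.val : ℤ)) := by
    intro n n'
    rw [← zpow_add₀ hq2ne]
    apply hper
    rw [ZMod.val_add]
    have hdm := Nat.div_add_mod (n.val + n'.val) (4 * p)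
    have hdm' : (4 * (p : ℤ)) * (((n.val + n'.val) / (4 * p) : ℕ) : ℤ)
        + (((n.val + n'.val) % (4 * p) : ℕ) : ℤ) = (n.val : ℤ) + (n'.val : ℤ) := by
      exact_mod_cast hdm
    have h2 : (-(((n.val + n'.val) % (4 * p) : ℕ) : ℤ)) =
        (-(n.val : ℤ) + -(n'.val : ℤ)) + (4 * (p : ℤ)) * (((n.val + n'.val) / (4 * p) : ℕ) : ℤ) := by
      linarith
    rw [h2, Int.add_mul_emod_self_left]
  have hκ_basmul : ∀ mn mn' : Fin p × ZMod (4 * p),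
      κ (bas mn * bas mn') = κ (bas mn) * κ (bas mn') := by
    intro mn mn'
    obtain ⟨m, n⟩ := mn
    obtain ⟨m', n'⟩ := mn'
    rw [hmul]
    split_ifs with h
    · rw [map_smul]
      simp only [hκ]
      by_cases hm : (m : ℕ) = 0
      · by_cases hm' : (m' : ℕ) = 0
        · rw [if_pos hm, if_pos hm',
            if_pos (by simp only [Fin.val_mk]; omega : ((⟨(m : ℕ) + (m' : ℕ), h⟩ : Fin p) : ℕ) = 0)]
          have hx : n.val * (m' : ℕ) = 0 := by simp [hm']
          rw [smul_eq_mul, hx, pow_zero, one_mul, hq2addmul]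
        · rw [if_neg hm',
            if_neg (by simp only [Fin.val_mk]; omega : ¬ ((⟨(m : ℕ) + (m' : ℕ), h⟩ : Fin p) : ℕ) = 0)]
          rw [smul_zero, mul_zero]
      · rw [if_neg hm,
          if_neg (by simp only [Fin.val_mk]; omega : ¬ ((⟨(m : ℕ) + (m' : ℕ), h⟩ : Fin p) : ℕ) = 0)]
        rw [smul_zero, zero_mul]
    · rw [map_zero]
      by_cases hm : (m : ℕ) = 0
      · have hm' : ¬ (m' : ℕ) = 0 := by omega
        simp only [hκ]
        rw [if_neg hm', mul_zero]
      · simp only [hκ]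
        rw [if_neg hm, zero_mul]
  have hκmul : ∀ x y : T, κ (x * y) = κ x * κ y := by
    have h1 : ∀ (mn : Fin p × ZMod (4 * p)) (y : T), κ (bas mn * y) = κ (bas mn) * κ y := by
      intro mn
      have hl : κ ∘ₗ (LinearMap.mulLeft ℂ (bas mn)) = κ (bas mn) • κ := by
        apply bas.ext
        intro mn'
        simp only [LinearMap.comp_apply, LinearMap.mulLeft_apply, LinearMap.smul_apply,
          smul_eq_mul]
        exact hκ_basmul mn mn'
      intro y
      have h2 := LinearMap.congr_fun hl y
      simpa using h2
    intro x y
    have hr : κ ∘ₗ (LinearMap.mulRight ℂ y) = κ y • κ := by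
      apply bas.ext
      intro mn
      simp only [LinearMap.comp_apply, LinearMap.mulRight_apply, LinearMap.smul_apply,
        smul_eq_mul]
      rw [h1 mn y, mul_comm]
    have h3 := LinearMap.congr_fun hr x
    simp only [LinearMap.comp_apply, LinearMap.mulRight_apply, LinearMap.smul_apply,
      smul_eq_mul] at h3
    rw [h3, mul_comm]
  let κA : T →ₐ[ℂ] ℂ := AlgHom.ofLinearMap κ hκ_one hκmul
  have hconv : ∀ α β : T →ₐ[ℂ] ℂ,
      dualMulT Δ α.toLinearMap β.toLinearMap =
        ((Algebra.TensorProduct.lmul' (R := ℂ) (S := ℂ)).comp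
          ((Algebra.TensorProduct.map α β).comp Δ)).toLinearMap := by
    intro α β
    apply LinearMap.ext
    intro x
    have hlin : ∀ t : T ⊗[ℂ] T,
        TensorProduct.lift ((LinearMap.mul ℂ ℂ).compl₁₂ α.toLinearMap β.toLinearMap) t =
          (Algebra.TensorProduct.lmul' (R := ℂ) (S := ℂ))
            ((Algebra.TensorProduct.map α β) t) := by
      intro t
      induction t with
      | zero => simp
      | tmul a b =>
        rw [hev]
        simp [Algebra.TensorProduct.lmul'_apply_tmul]
      | add u v ihu ihv => rw [map_add, map_add, map_add, ihu, ihv]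
    exact hlin (Δ x)
  let cpow : ℕ → (T →ₐ[ℂ] ℂ) := fun j => Nat.rec εa (fun _ ih =>
      (Algebra.TensorProduct.lmul' (R := ℂ) (S := ℂ)).comp
        ((Algebra.TensorProduct.map κA ih).comp Δ)) j
  have hsucc : ∀ (j : ℕ) (x : T), cpow (j + 1) x =
      (Algebra.TensorProduct.lmul' (R := ℂ) (S := ℂ))
        ((Algebra.TensorProduct.map κA (cpow j)) (Δ x)) := fun j x => rfl
  have hdp : ∀ j, dualPow Δ εa.toLinearMap κ j = (cpow j).toLinearMap := by
    intro j
    induction j with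
    | zero => rfl
    | succ j ih =>
      show dualMulT Δ κ (dualPow Δ εa.toLinearMap κ j) = _
      rw [ih]
      have h2 : κ = κA.toLinearMap := rfl
      rw [h2, hconv κA (cpow j)]
  have hκA_E : κA E = 0 := by
    show κ E = 0
    rw [hbas_E, hκ]
    simp [he1]
  have hκA_K : κA K = q2⁻¹ := by
    show κ K = q2⁻¹
    rw [hbas_K, hκ]
    simp [he0, ZMod.val_one]
  have hκA_one : κA 1 = 1 := map_one κA
  have hcpowE : ∀ j, cpow j E = 0 := by
    intro j
    induction j with
    | zero => exact hεE
    | succ j ih =>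
      rw [hsucc, hΔE]
      simp only [map_add, Algebra.TensorProduct.map_tmul,
        Algebra.TensorProduct.lmul'_apply_tmul]
      rw [hκA_E, ih]
      ring
  have hcpowK : ∀ j, cpow j K = q2 ^ (-(j : ℤ)) := by
    intro j
    induction j with
    | zero =>
      show εa K = _
      rw [hεK]
      simp
    | succ j ih =>
      rw [hsucc, hΔK]
      simp only [Algebra.TensorProduct.map_tmul, Algebra.TensorProduct.lmul'_apply_tmul]
      rw [hκA_K, ih, ← zpow_neg_one, ← zpow_add₀ hq2ne]
      congr 1
      push_cast
      ring
  have hgen : ∀ f g : T →ₐ[ℂ] ℂ, f E = g E → f K = g K → f = g := by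
    intro f g hfE hfK
    apply AlgHom.toLinearMap_injective
    apply bas.ext
    intro mn
    simp only [AlgHom.toLinearMap_apply]
    rw [hbas mn, map_mul, map_mul, map_pow, map_pow, map_pow, map_pow, hfE, hfK]
  have claim3 : dualPow Δ εa.toLinearMap κ (4 * p) = εa.toLinearMap := by
    rw [hdp (4 * p)]
    congr 1
    apply hgen
    · rw [hcpowE, hεE]
    · rw [hcpowK, hεK, zpow_neg, zpow_natCast, hq2ord, inv_one]
  exact ⟨claim1, claim2, claim3⟩
end
end

section
/- In the Drinfeld double D(B) of the Taft algebra B (generated by E, k; with F, κ generating B*), the cross-relations kκ = κk, kFk⁻¹ = q⁻¹F, κEκ⁻¹ = q⁻¹E, and [E,F] = (k² − κ²)/(q − q⁻¹) hold, where E, k abbreviate ε⊗E, ε⊗k and F, κ abbreviate F⊗1, κ⊗1. -/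
/-!
STATEMENT 7: In the Drinfeld double `D(B)` of the Taft algebra `B` (with
`E, k` abbreviating `ε⊗E, ε⊗k` and `F, κ` abbreviating `F⊗1, κ⊗1`), the
cross-relations `kκ = κk`, `kFk⁻¹ = q⁻¹F`, `κEκ⁻¹ = q⁻¹E`, and
`[E,F] = (k² − κ²)/(q − q⁻¹)` hold.  The double `D(B) = B* ⊗ B` carries the
multiplication `(μ⊗m)(ν⊗n) = μ(m' ⇀ ν ↼ S⁻¹(m''')) ⊗ m''n`.
-/

open TensorProduct

noncomputable section

variable {T : Type*} [Ring T] [Algebra ℂ T]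

lemma pow_mod_eq_taft {M : Type*} [Monoid M] (z : M) {N : ℕ} (hz : z ^ N = 1) (b : ℕ) :
    z ^ b = z ^ (b % N) := by
  conv_lhs => rw [← Nat.div_add_mod b N]
  rw [pow_add, pow_mul, hz, one_pow, one_mul]

set_option maxHeartbeats 1000000 in
theorem drinfeld_double_taft_cross_relations
    (p : ℕ) (hp : 2 ≤ p)
    (q q2 : ℂ)
    (hq : q = Complex.exp (Real.pi * Complex.I / p))
    (hq2 : q2 = Complex.exp (Real.pi * Complex.I / (2 * p)))
    (E K : T)
    (hcomm : K * E = q • (E * K)) (hEnil : E ^ p = 0) (hKord : K ^ (4 * p) = 1)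
    (bas : Module.Basis (Fin p × ZMod (4 * p)) ℂ T)
    (hbas : ∀ mn : Fin p × ZMod (4 * p), bas mn = E ^ (mn.1 : ℕ) * K ^ mn.2.val)
    (Δ : T →ₐ[ℂ] T ⊗[ℂ] T)
    (hΔE : Δ E = 1 ⊗ₜ[ℂ] E + E ⊗ₜ[ℂ] (K * K)) (hΔK : Δ K = K ⊗ₜ[ℂ] K)
    (εa : T →ₐ[ℂ] ℂ) (hεE : εa E = 0) (hεK : εa K = 1)
    -- the antipode and its inverse
    (S : T →ₗ[ℂ] T) (hSanti : ∀ x y : T, S (x * y) = S y * S x) (hS1 : S 1 = 1)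
    (hSE : S E = -(E * K ^ (4 * p - 2))) (hSK : S K = K ^ (4 * p - 1))
    (Sinv : T →ₗ[ℂ] T) (hSinv : ∀ x : T, S (Sinv x) = x ∧ Sinv (S x) = x)
    -- the dual generators
    (F κ : Module.Dual ℂ T)
    (hF : ∀ mn : Fin p × ZMod (4 * p),
      F (bas mn) = if (mn.1 : ℕ) = 1 then q ^ (-(mn.2.val : ℤ)) / (q - q⁻¹) else 0)
    (hκ : ∀ mn : Fin p × ZMod (4 * p),
      κ (bas mn) = if (mn.1 : ℕ) = 0 then q2 ^ (-(mn.2.val : ℤ)) else 0)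
    -- the Drinfeld double multiplication
    (mulD : (Module.Dual ℂ T ⊗[ℂ] T) →ₗ[ℂ] (Module.Dual ℂ T ⊗[ℂ] T) →ₗ[ℂ]
        (Module.Dual ℂ T ⊗[ℂ] T))
    (mulD_def : ∀ (μ ν : Module.Dual ℂ T) (m n : T)
        (M : ℕ) (m1 m2 m3 : Fin M → T)
        (_ : (TensorProduct.map Δ.toLinearMap LinearMap.id) (Δ m)
              = ∑ j, (m1 j ⊗ₜ[ℂ] m2 j) ⊗ₜ[ℂ] m3 j),
        mulD (μ ⊗ₜ[ℂ] m) (ν ⊗ₜ[ℂ] n)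
          = ∑ j, (dualMulT Δ μ
              (ν ∘ₗ (LinearMap.mulLeft ℂ (Sinv (m3 j))) ∘ₗ (LinearMap.mulRight ℂ (m1 j))))
              ⊗ₜ[ℂ] (m2 j * n)) :
    -- the cross-relations (ε ≔ εa.toLinearMap is the unit of B*)
    (mulD (εa.toLinearMap ⊗ₜ[ℂ] K) (κ ⊗ₜ[ℂ] (1 : T))
        = mulD (κ ⊗ₜ[ℂ] (1 : T)) (εa.toLinearMap ⊗ₜ[ℂ] K)) ∧
    (mulD (εa.toLinearMap ⊗ₜ[ℂ] K) (F ⊗ₜ[ℂ] (1 : T))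
        = q⁻¹ • mulD (F ⊗ₜ[ℂ] (1 : T)) (εa.toLinearMap ⊗ₜ[ℂ] K)) ∧
    (mulD (κ ⊗ₜ[ℂ] (1 : T)) (εa.toLinearMap ⊗ₜ[ℂ] E)
        = q⁻¹ • mulD (εa.toLinearMap ⊗ₜ[ℂ] E) (κ ⊗ₜ[ℂ] (1 : T))) ∧
    (mulD (εa.toLinearMap ⊗ₜ[ℂ] E) (F ⊗ₜ[ℂ] (1 : T))
        - mulD (F ⊗ₜ[ℂ] (1 : T)) (εa.toLinearMap ⊗ₜ[ℂ] E)
      = (q - q⁻¹)⁻¹ •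
          ((εa.toLinearMap ⊗ₜ[ℂ] (K * K)) - (dualMulT Δ κ κ ⊗ₜ[ℂ] (1 : T)))) := by
  classical
  haveI : NeZero (4*p) := ⟨by omega⟩
  obtain ⟨c, hc⟩ : ∃ c, 4*p = c+8 := ⟨4*p-8, by omega⟩
  -- scalar facts
  have hpC : (p:ℂ) ≠ 0 := Nat.cast_ne_zero.mpr (by omega)
  have hq0 : q ≠ 0 := by rw [hq]; exact Complex.exp_ne_zero _
  have hq20 : q2 ≠ 0 := by rw [hq2]; exact Complex.exp_ne_zero _
  have hq2sq : q2 * q2 = q := by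
    rw [hq, hq2, ← Complex.exp_add]; congr 1; field_simp; ring
  have hq2p : q ^ (2*p) = 1 := by
    rw [hq, ← Complex.exp_nat_mul]
    rw [show ((2*p : ℕ):ℂ) * (Real.pi * Complex.I / p) = 2 * Real.pi * Complex.I by
      push_cast; field_simp]
    exact Complex.exp_two_pi_mul_I
  have hq4 : q ^ (4*p) = 1 := by rw [show 4*p = 2*p*2 by ring, pow_mul, hq2p, one_pow]
  have hq24 : q2 ^ (4*p) = 1 := by
    have h2 : q2 ^ 2 = q := by rw [sq, hq2sq]
    rw [show 4*p = 2*(2*p) by ring, pow_mul, h2, hq2p]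
  have hqinv1 : q ^ (4*p-1) = q⁻¹ := by
    refine eq_inv_of_mul_eq_one_left ?_
    rw [← pow_succ, show (4*p-1)+1 = 4*p by omega, hq4]
  have hqinv2 : q ^ (4*p-2) = q⁻¹ * q⁻¹ := by
    have h : q ^ (4*p-2) * (q*q) = 1 := by
      rw [← mul_assoc, ← pow_succ, ← pow_succ, show (4*p-2)+1+1 = 4*p by omega, hq4]
    rw [eq_inv_of_mul_eq_one_left h]
    exact mul_inv_rev q q
  have hq2inv2 : q2 ^ (4*p-2) = q⁻¹ := by
    have h : q2 ^ (4*p-2) * (q2*q2) = 1 := by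
      rw [← mul_assoc, ← pow_succ, ← pow_succ, show (4*p-2)+1+1 = 4*p by omega, hq24]
    rw [hq2sq] at h
    exact eq_inv_of_mul_eq_one_left h
  -- algebra facts in T
  have Epow0 : ∀ a : ℕ, p ≤ a → E ^ a = 0 := by
    intro a ha; rw [show a = p + (a-p) by omega, pow_add, hEnil, zero_mul]
  have commK1 : ∀ a : ℕ, K ^ a * E = q ^ a • (E * K ^ a) := by
    intro a; induction a with
    | zero => simp
    | succ n ih =>
      rw [pow_succ, mul_assoc, hcomm, mul_smul_comm, ← mul_assoc, ih,
        smul_mul_assoc, smul_smul, mul_assoc]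
      congr 1
      ring
  have commKE : ∀ a b : ℕ, K ^ a * E ^ b = q ^ (a*b) • (E ^ b * K ^ a) := by
    intro a b; induction b with
    | zero => simp
    | succ n ih =>
      rw [pow_succ, ← mul_assoc, ih, smul_mul_assoc, mul_assoc, commK1,
        mul_smul_comm, smul_smul, ← mul_assoc, ← pow_succ, ← pow_add]
      ring_nf
  have mulForm : ∀ a b cc d : ℕ,
      (E^a * K^b) * (E^cc * K^d) = q^(b*cc) • (E^(a+cc) * K^(b+d)) := by
    intro a b cc d
    rw [mul_assoc, ← mul_assoc (K^b), commKE, smul_mul_assoc, mul_smul_comm,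
      pow_add, pow_add]
    congr 1
    rw [mul_assoc, mul_assoc]
  have Ksand : ∀ cc a b : ℕ, K^cc * (E^a * K^b) = q^(cc*a) • (E^a * K^(cc+b)) := by
    intro cc a b
    rw [← mul_assoc, commKE, smul_mul_assoc, mul_assoc, ← pow_add]
  have mulE' : ∀ a b : ℕ, (E^a * K^b) * E = q^b • (E^(a+1) * K^b) := by
    intro a b
    have := mulForm a b 1 0
    simpa using this
  -- basis and evaluations
  have basForm : ∀ (a : ℕ) (ha : a < p) (b : ℕ),
      E ^ a * K ^ b = bas (⟨a, ha⟩, (b : ZMod (4*p))) := by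
    intro a ha b
    rw [hbas]
    rw [ZMod.val_natCast, ← pow_mod_eq_taft K hKord]
  have valκ : ∀ a b : ℕ, κ (E ^ a * K ^ b) = if a = 0 then (q2 ^ b)⁻¹ else 0 := by
    intro a b
    rcases lt_or_ge a p with h | h
    · rw [basForm a h b, hκ]
      dsimp only
      rw [ZMod.val_natCast, zpow_neg, zpow_natCast, ← pow_mod_eq_taft q2 hq24 b]
    · rw [Epow0 a h, zero_mul, map_zero, if_neg (by omega)]
  have valF : ∀ a b : ℕ, F (E ^ a * K ^ b) = if a = 1 then (q ^ b)⁻¹ / (q - q⁻¹) else 0 := by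
    intro a b
    rcases lt_or_ge a p with h | h
    · rw [basForm a h b, hF]
      dsimp only
      rw [ZMod.val_natCast, zpow_neg, zpow_natCast, ← pow_mod_eq_taft q hq4 b]
    · rw [Epow0 a h, zero_mul, map_zero, if_neg (by omega)]
  have valε : ∀ a b : ℕ, εa.toLinearMap (E ^ a * K ^ b) = if a = 0 then 1 else 0 := by
    intro a b
    simp [map_mul, map_pow, hεE, hεK, zero_pow_eq]
  -- antipode facts
  have SKpow : ∀ a : ℕ, S (K ^ a) = K ^ ((4*p-1) * a) := by
    intro a; induction a with
    | zero => simpa using hS1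
    | succ n ih =>
      rw [pow_succ, hSanti, hSK, ih, ← pow_add]
      congr 1; ring
  have modred : ∀ a b : ℕ, K ^ (4*p*a + b) = K ^ b := by
    intro a b; rw [pow_add, pow_mul, hKord, one_pow, one_mul]
  have e1' : 4*p-1 = c+7 := by omega
  have e2' : 4*p-2 = c+6 := by omega
  have e3' : 4*p-3 = c+5 := by omega
  have SinvK : Sinv K = K ^ (4*p-1) := by
    have h : S (K ^ (4*p-1)) = K := by
      rw [SKpow, show (4*p-1)*(4*p-1) = 4*p*(4*p-2)+1 by rw [e1', e2', hc]; ring,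
        modred, pow_one]
    have h2 := (hSinv (K ^ (4*p-1))).2
    rw [h] at h2
    exact h2
  have SinvKK : Sinv (K*K) = K ^ (4*p-2) := by
    have h : S (K ^ (4*p-2)) = K*K := by
      rw [SKpow, show (4*p-1)*(4*p-2) = 4*p*(4*p-3)+2 by rw [e1', e2', e3', hc]; ring,
        modred, pow_two]
    have h2 := (hSinv (K ^ (4*p-2))).2
    rw [h] at h2
    exact h2
  have Sinv1 : Sinv (1:T) = 1 := by
    have h := (hSinv (1:T)).2
    rwa [hS1] at h
  have SinvE : Sinv E = (-(q⁻¹*q⁻¹)) • (E^1 * K ^ (4*p-2)) := by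
    have h : S ((-(q⁻¹*q⁻¹)) • (E^1 * K ^ (4*p-2))) = E := by
      rw [map_smul, pow_one, hSanti, hSE, SKpow,
        show (4*p-1)*(4*p-2) = 4*p*(4*p-3)+2 by rw [e1', e2', e3', hc]; ring, modred]
      rw [mul_neg, ← mul_assoc, commK1 2, smul_mul_assoc, mul_assoc, ← pow_add,
        show 2+(4*p-2) = 4*p by omega, hKord, mul_one]
      rw [smul_neg, neg_smul, neg_neg, smul_smul]
      rw [show q⁻¹*q⁻¹*q^2 = 1 by rw [sq]; field_simp, one_smul]
    have h2 := (hSinv ((-(q⁻¹*q⁻¹)) • (E^1 * K ^ (4*p-2)))).2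
    rw [h] at h2
    exact h2
  -- counit properties
  have key_l : ∀ α : Module.Dual ℂ T, dualMulT Δ εa.toLinearMap α = α := by
    have hA : ∀ x : T, (Algebra.TensorProduct.lid ℂ T)
        ((Algebra.TensorProduct.map εa (AlgHom.id ℂ T)) (Δ x)) = x := by
      set A : T →ₐ[ℂ] T := ((Algebra.TensorProduct.lid ℂ T).toAlgHom.comp
        ((Algebra.TensorProduct.map εa (AlgHom.id ℂ T)).comp Δ)) with hAdef
      have h1 : A E = E := by
        simp [hAdef, hΔE, hεE]
      have h2 : A K = K := by
        simp [hAdef, hΔK, hεK]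
      have hAall : A.toLinearMap = LinearMap.id := by
        apply Module.Basis.ext bas
        intro mn
        rw [hbas]
        simp only [AlgHom.toLinearMap_apply, LinearMap.id_coe, id_eq]
        rw [map_mul, map_pow, map_pow, h1, h2]
      intro x
      have := DFunLike.congr_fun hAall x
      exact this
    intro α
    have keyt : TensorProduct.lift ((LinearMap.mul ℂ ℂ).compl₁₂ εa.toLinearMap α)
        = α ∘ₗ ((Algebra.TensorProduct.lid ℂ T).toLinearMap ∘ₗ
            (Algebra.TensorProduct.map εa (AlgHom.id ℂ T)).toLinearMap) := by
      apply TensorProduct.ext'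
      intro a b
      simp [smul_eq_mul]
    ext x
    simp only [dualMulT, LinearMap.comp_apply, keyt, AlgEquiv.toLinearMap_apply,
      AlgHom.toLinearMap_apply]
    exact congrArg α (hA x)
  have key_r : ∀ α : Module.Dual ℂ T, dualMulT Δ α εa.toLinearMap = α := by
    have hA : ∀ x : T, (Algebra.TensorProduct.rid ℂ ℂ T)
        ((Algebra.TensorProduct.map (AlgHom.id ℂ T) εa) (Δ x)) = x := by
      set A : T →ₐ[ℂ] T := ((Algebra.TensorProduct.rid ℂ ℂ T).toAlgHom.comp
        ((Algebra.TensorProduct.map (AlgHom.id ℂ T) εa).comp Δ)) with hAdef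
      have h1 : A E = E := by
        simp [hAdef, hΔE, hεE, hεK]
      have h2 : A K = K := by
        simp [hAdef, hΔK, hεK]
      have hAall : A.toLinearMap = LinearMap.id := by
        apply Module.Basis.ext bas
        intro mn
        rw [hbas]
        simp only [AlgHom.toLinearMap_apply, LinearMap.id_coe, id_eq]
        rw [map_mul, map_pow, map_pow, h1, h2]
      intro x
      have := DFunLike.congr_fun hAall x
      exact this
    intro α
    have keyt : TensorProduct.lift ((LinearMap.mul ℂ ℂ).compl₁₂ α εa.toLinearMap)
        = α ∘ₗ ((Algebra.TensorProduct.rid ℂ ℂ T).toLinearMap ∘ₗ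
            (Algebra.TensorProduct.map (AlgHom.id ℂ T) εa).toLinearMap) := by
      apply TensorProduct.ext'
      intro a b
      simp [smul_eq_mul, mul_comm]
    ext x
    simp only [dualMulT, LinearMap.comp_apply, keyt, AlgEquiv.toLinearMap_apply,
      AlgHom.toLinearMap_apply]
    exact congrArg α (hA x)
  -- κ is a character
  have hκone : κ (1:T) = 1 := by
    have := valκ 0 0
    simpa using this
  have hκE : κ E = 0 := by
    have := valκ 1 0
    simpa using this
  have hκK : κ K = q2⁻¹ := by
    have := valκ 0 1
    simpa using this
  have hκmul : ∀ x y : T, κ (x*y) = κ x * κ y := by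
    have hbl : (LinearMap.mul ℂ T).compr₂ κ = (LinearMap.mul ℂ ℂ).compl₁₂ κ κ := by
      apply Module.Basis.ext bas
      intro i
      apply Module.Basis.ext bas
      intro j
      obtain ⟨m, n⟩ := i
      obtain ⟨m', n'⟩ := j
      simp only [LinearMap.compr₂_apply, LinearMap.mul_apply', LinearMap.compl₁₂_apply]
      rw [hbas, hbas]
      dsimp only
      rw [mulForm, map_smul, smul_eq_mul, valκ, valκ, valκ]
      by_cases h1 : (m:ℕ) = 0
      · by_cases h2 : (m':ℕ) = 0
        · simp [h1, h2, pow_add, mul_inv, mul_comm]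
        · rw [if_neg (by omega), if_neg h2, mul_zero, mul_zero]
      · rw [if_neg (by omega), if_neg h1, mul_zero, zero_mul]
    intro x y
    have := DFunLike.congr_fun (DFunLike.congr_fun hbl x) y
    simpa using this
  set χ : T →ₐ[ℂ] ℂ := AlgHom.ofLinearMap κ hκone hκmul with hχdef
  have χ_apply : ∀ x, χ x = κ x := fun _ => rfl
  have valκκ : ∀ a b : ℕ,
      dualMulT Δ κ κ (E ^ a * K ^ b) = if a = 0 then (q ^ b)⁻¹ else 0 := by
    set G : T →ₐ[ℂ] ℂ := (Algebra.TensorProduct.lmul' ℂ).comp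
      ((Algebra.TensorProduct.map χ χ).comp Δ) with hGdef
    have hGx : ∀ x, dualMulT Δ κ κ x = G x := by
      have keyt : TensorProduct.lift ((LinearMap.mul ℂ ℂ).compl₁₂ κ κ)
          = (Algebra.TensorProduct.lmul' ℂ (S := ℂ)).toLinearMap ∘ₗ
              (Algebra.TensorProduct.map χ χ).toLinearMap := by
        apply TensorProduct.ext'
        intro a b
        simp [χ_apply, Algebra.TensorProduct.lmul'_apply_tmul]
      intro x
      simp only [dualMulT, LinearMap.comp_apply, keyt, AlgHom.toLinearMap_apply, hGdef,
        AlgHom.comp_apply]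
    have hGE : G E = 0 := by
      simp [hGdef, hΔE, Algebra.TensorProduct.lmul'_apply_tmul, χ_apply, hκE]
    have hGK : G K = q⁻¹ := by
      simp only [hGdef, AlgHom.comp_apply, hΔK, Algebra.TensorProduct.map_tmul,
        Algebra.TensorProduct.lmul'_apply_tmul, χ_apply, hκK]
      rw [← mul_inv, hq2sq]
    intro a b
    rw [hGx, map_mul, map_pow, map_pow, hGE, hGK, zero_pow_eq, inv_pow]
    by_cases h : a = 0 <;> simp [h]
  -- product computations in the double
  have prod1 : ∀ (μ ν : Module.Dual ℂ T) (n : T),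
      mulD (μ ⊗ₜ[ℂ] (1:T)) (ν ⊗ₜ[ℂ] n) = (dualMulT Δ μ ν) ⊗ₜ[ℂ] n := by
    intro μ ν n
    have hyp : (TensorProduct.map Δ.toLinearMap LinearMap.id) (Δ (1:T))
        = ∑ _j : Fin 1, (((1:T) ⊗ₜ[ℂ] (1:T)) ⊗ₜ[ℂ] (1:T)) := by
      simp [Algebra.TensorProduct.one_def]
    rw [mulD_def μ ν 1 n 1 (fun _ => 1) (fun _ => 1) (fun _ => 1) hyp,
      Fin.sum_univ_one, Sinv1]
    have hν : ν ∘ₗ LinearMap.mulLeft ℂ (1:T) ∘ₗ LinearMap.mulRight ℂ (1:T) = ν := by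
      ext z; simp
    rw [hν, one_mul]
  have prodK : ∀ (ν : Module.Dual ℂ T) (n : T),
      mulD (εa.toLinearMap ⊗ₜ[ℂ] K) (ν ⊗ₜ[ℂ] n)
        = (dualMulT Δ εa.toLinearMap
            (ν ∘ₗ LinearMap.mulLeft ℂ (K^(4*p-1)) ∘ₗ LinearMap.mulRight ℂ K))
              ⊗ₜ[ℂ] (K * n) := by
    intro ν n
    have hyp : (TensorProduct.map Δ.toLinearMap LinearMap.id) (Δ K)
        = ∑ _j : Fin 1, ((K ⊗ₜ[ℂ] K) ⊗ₜ[ℂ] K) := by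
      simp [hΔK]
    rw [mulD_def εa.toLinearMap ν K n 1 (fun _ => K) (fun _ => K) (fun _ => K) hyp,
      Fin.sum_univ_one, SinvK]
  have prodE : ∀ (ν : Module.Dual ℂ T) (n : T),
      mulD (εa.toLinearMap ⊗ₜ[ℂ] E) (ν ⊗ₜ[ℂ] n)
        = (dualMulT Δ εa.toLinearMap
            (ν ∘ₗ LinearMap.mulLeft ℂ (Sinv E) ∘ₗ LinearMap.mulRight ℂ (1:T)))
              ⊗ₜ[ℂ] (1 * n)
        + (dualMulT Δ εa.toLinearMap
            (ν ∘ₗ LinearMap.mulLeft ℂ (K^(4*p-2)) ∘ₗ LinearMap.mulRight ℂ (1:T)))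
              ⊗ₜ[ℂ] (E * n)
        + (dualMulT Δ εa.toLinearMap
            (ν ∘ₗ LinearMap.mulLeft ℂ (K^(4*p-2)) ∘ₗ LinearMap.mulRight ℂ E))
              ⊗ₜ[ℂ] ((K*K) * n) := by
    intro ν n
    have hyp : (TensorProduct.map Δ.toLinearMap LinearMap.id) (Δ E)
        = ∑ j : Fin 3, ((![(1:T),1,E] j ⊗ₜ[ℂ] ![(1:T),E,K*K] j) ⊗ₜ[ℂ] ![E,K*K,K*K] j) := by
      rw [hΔE, map_add]
      simp [Fin.sum_univ_three, hΔE, Algebra.TensorProduct.one_def,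
        TensorProduct.add_tmul]
      rw [← add_assoc]
    rw [mulD_def εa.toLinearMap ν E n 3 ![(1:T),1,E] ![(1:T),E,K*K] ![E,K*K,K*K] hyp,
      Fin.sum_univ_three]
    simp only [Matrix.cons_val_zero, Matrix.cons_val_one, Matrix.head_cons,
      Matrix.cons_val_two, Matrix.tail_cons]
    rw [SinvKK]
  -- functional identities
  have e1 : κ ∘ₗ LinearMap.mulLeft ℂ (K^(4*p-1)) ∘ₗ LinearMap.mulRight ℂ K = κ := by
    apply Module.Basis.ext bas
    rintro ⟨m, n⟩
    rw [hbas]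
    dsimp only
    simp only [LinearMap.comp_apply, LinearMap.mulLeft_apply, LinearMap.mulRight_apply]
    rw [mul_assoc, ← pow_succ, Ksand, map_smul, smul_eq_mul, valκ, valκ]
    by_cases h : (m:ℕ) = 0
    · rw [if_pos h, if_pos h, h, mul_zero, pow_zero, one_mul,
        show (4*p-1) + (n.val + 1) = 4*p + n.val by omega, pow_add, hq24, one_mul]
    · rw [if_neg h, if_neg h, mul_zero]
  have e2 : F ∘ₗ LinearMap.mulLeft ℂ (K^(4*p-1)) ∘ₗ LinearMap.mulRight ℂ K
      = q⁻¹ • F := by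
    apply Module.Basis.ext bas
    rintro ⟨m, n⟩
    rw [hbas]
    dsimp only
    simp only [LinearMap.comp_apply, LinearMap.mulLeft_apply, LinearMap.mulRight_apply,
      LinearMap.smul_apply, smul_eq_mul]
    rw [mul_assoc, ← pow_succ, Ksand, map_smul, smul_eq_mul, valF, valF]
    by_cases h : (m:ℕ) = 1
    · rw [if_pos h, if_pos h, h, mul_one, hqinv1,
        show (4*p-1) + (n.val + 1) = 4*p + n.val by omega, pow_add, hq4, one_mul]
    · rw [if_neg h, if_neg h, mul_zero, mul_zero]
  have e3a : κ ∘ₗ LinearMap.mulLeft ℂ (Sinv E) ∘ₗ LinearMap.mulRight ℂ (1:T)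
      = 0 := by
    apply Module.Basis.ext bas
    rintro ⟨m, n⟩
    rw [hbas]
    dsimp only
    simp only [LinearMap.comp_apply, LinearMap.mulLeft_apply, LinearMap.mulRight_apply,
      LinearMap.zero_apply]
    rw [mul_one, SinvE, smul_mul_assoc, map_smul, mulForm, map_smul, valκ,
      if_neg (by omega)]
    simp
  have e3b : κ ∘ₗ LinearMap.mulLeft ℂ (K^(4*p-2)) ∘ₗ LinearMap.mulRight ℂ (1:T)
      = q • κ := by
    apply Module.Basis.ext bas
    rintro ⟨m, n⟩
    rw [hbas]
    dsimp only
    simp only [LinearMap.comp_apply, LinearMap.mulLeft_apply, LinearMap.mulRight_apply,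
      LinearMap.smul_apply, smul_eq_mul]
    rw [mul_one, Ksand, map_smul, smul_eq_mul, valκ, valκ]
    by_cases h : (m:ℕ) = 0
    · rw [if_pos h, if_pos h, h, mul_zero, pow_zero, one_mul, pow_add, mul_inv,
        hq2inv2, inv_inv]
    · rw [if_neg h, if_neg h, mul_zero, mul_zero]
  have e3c : κ ∘ₗ LinearMap.mulLeft ℂ (K^(4*p-2)) ∘ₗ LinearMap.mulRight ℂ E
      = 0 := by
    apply Module.Basis.ext bas
    rintro ⟨m, n⟩
    rw [hbas]
    dsimp only
    simp only [LinearMap.comp_apply, LinearMap.mulLeft_apply, LinearMap.mulRight_apply,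
      LinearMap.zero_apply]
    rw [mulE', mul_smul_comm, Ksand, map_smul, map_smul, valκ, if_neg (by omega)]
    simp
  have e4a : F ∘ₗ LinearMap.mulLeft ℂ (Sinv E) ∘ₗ LinearMap.mulRight ℂ (1:T)
      = (-(q - q⁻¹)⁻¹) • dualMulT Δ κ κ := by
    apply Module.Basis.ext bas
    rintro ⟨m, n⟩
    rw [hbas]
    dsimp only
    simp only [LinearMap.comp_apply, LinearMap.mulLeft_apply, LinearMap.mulRight_apply,
      LinearMap.smul_apply, smul_eq_mul]
    rw [mul_one, SinvE, smul_mul_assoc, map_smul, mulForm, map_smul, valF, valκκ]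
    by_cases h : (m:ℕ) = 0
    · rw [if_pos h, if_pos (by omega : 1 + (m:ℕ) = 1), h, mul_zero, pow_zero, one_smul,
        pow_add, mul_inv, div_eq_mul_inv, neg_smul, smul_eq_mul,
        hqinv2, mul_inv, inv_inv]
      have hqq : q⁻¹ * q⁻¹ * (q * q) = 1 := by field_simp
      linear_combination (-((q ^ n.val)⁻¹ * (q - q⁻¹)⁻¹)) * hqq
    · rw [if_neg h, if_neg (by omega), mul_zero, smul_zero, smul_zero]
  have e4b : F ∘ₗ LinearMap.mulLeft ℂ (K^(4*p-2)) ∘ₗ LinearMap.mulRight ℂ (1:T)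
      = F := by
    apply Module.Basis.ext bas
    rintro ⟨m, n⟩
    rw [hbas]
    dsimp only
    simp only [LinearMap.comp_apply, LinearMap.mulLeft_apply, LinearMap.mulRight_apply]
    rw [mul_one, Ksand, map_smul, smul_eq_mul, valF, valF]
    by_cases h : (m:ℕ) = 1
    · rw [if_pos h, if_pos h, h, mul_one, pow_add, mul_inv, div_eq_mul_inv,
        div_eq_mul_inv, ← mul_assoc, ← mul_assoc,
        mul_inv_cancel₀ (pow_ne_zero _ hq0), one_mul]
    · rw [if_neg h, if_neg h, mul_zero]
  have e4c : F ∘ₗ LinearMap.mulLeft ℂ (K^(4*p-2)) ∘ₗ LinearMap.mulRight ℂ E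
      = (q - q⁻¹)⁻¹ • εa.toLinearMap := by
    apply Module.Basis.ext bas
    rintro ⟨m, n⟩
    rw [hbas]
    dsimp only
    simp only [LinearMap.comp_apply, LinearMap.mulLeft_apply, LinearMap.mulRight_apply,
      LinearMap.smul_apply, smul_eq_mul]
    rw [mulE', mul_smul_comm, Ksand, map_smul, map_smul, smul_eq_mul, smul_eq_mul,
      valF, valε]
    by_cases h : (m:ℕ) = 0
    · rw [if_pos h, if_pos (by omega : (m:ℕ) + 1 = 1), h, pow_add, mul_one,
        mul_inv, div_eq_mul_inv]
      have hqq : q ^ (4*p-2) * (q ^ (4*p-2))⁻¹ = 1 := mul_inv_cancel₀ (pow_ne_zero _ hq0)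
      have hqn : q ^ n.val * (q ^ n.val)⁻¹ = 1 := mul_inv_cancel₀ (pow_ne_zero _ hq0)
      linear_combination ((q - q⁻¹)⁻¹ * (q ^ n.val * (q ^ n.val)⁻¹)) * hqq
        + (q - q⁻¹)⁻¹ * hqn
    · rw [if_neg (by omega), if_neg h, mul_zero, mul_zero, mul_zero]
  -- final assembly
  refine ⟨?_, ?_, ?_, ?_⟩
  · rw [prodK κ 1, e1, key_l, prod1 κ εa.toLinearMap K, key_r, mul_one]
  · rw [prodK F 1, e2, key_l, prod1 F εa.toLinearMap K, key_r, mul_one,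
      TensorProduct.smul_tmul']
  · rw [prod1 κ εa.toLinearMap E, key_r, prodE κ 1, e3a, e3b, e3c]
    simp only [key_l]
    simp only [TensorProduct.zero_tmul, mul_one, zero_add, add_zero]
    rw [TensorProduct.smul_tmul', smul_smul, inv_mul_cancel₀ hq0, one_smul]
  · rw [prodE F 1, e4a, e4b, e4c, prod1 F εa.toLinearMap E, key_r]
    simp only [key_l]
    simp only [mul_one, one_mul, smul_sub, TensorProduct.smul_tmul', neg_smul,
      TensorProduct.neg_tmul]
    abel
end
end
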